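/- arXiv:0809.1363 — 4 statements merged into one kernel-verified Lean document; each statement's English description precedes it below -/
import Mathlib

section
/- Let $k$ be an algebraically closed field of characteristic $p>0$ and $A$ a finite-dimensional symmetric $k$-algebra with symmetrizing form $(\cdot,\cdot)$. Let $K(A)$ be the $k$-span of all commutators $[a,b]=ab-ba$, and for $n\ge 0$ let $T_n(A)=\{x\in A : x^{p^n}\in K(A)\}$ and $T_n^\perp(A)$ its orthogonal space. Then the spaces $T_n^\perp(A)$ form a decreasing chain of ideals of the center: $Z(A)=K(A)^\perp=T_0^\perp(A)\supseteq T_1^\perp(A)\supseteq T_2^\perp(A)\supseteq\cdots$. -/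
/-- The commutator subspace `K(A)`: the `k`-span of all commutators `a*b - b*a`. -/
def commutatorSpan (k A : Type*) [Field k] [Ring A] [Algebra k A] : Submodule k A :=
  Submodule.span k {x : A | ∃ a b : A, x = a * b - b * a}

/-- `T_n(A) = {x ∈ A | x^(p^n) ∈ K(A)}`. -/
def TnSet (k : Type*) {A : Type*} [Field k] [Ring A] [Algebra k A] (p n : ℕ) : Set A :=
  {x : A | x ^ p ^ n ∈ commutatorSpan k A}

/-- The orthogonal space of a subset with respect to a bilinear form. -/
def perpSet {k A : Type*} [Field k] [Ring A] [Algebra k A]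
    (B : A →ₗ[k] A →ₗ[k] k) (S : Set A) : Set A :=
  {x : A | ∀ y ∈ S, B x y = 0}

section Helpers

variable {k A : Type*} [Field k] [Ring A] [Algebra k A]

theorem mem_commutatorSpan (a b : A) : a * b - b * a ∈ commutatorSpan k A :=
  Submodule.subset_span ⟨a, b, rfl⟩

theorem natp_zero (k : Type*) {A : Type*} [Field k] [Ring A] [Algebra k A]
    (p : ℕ) [CharP k p] : ((p : ℕ) : A) = 0 := by
  have h : ((p : ℕ) : A) = algebraMap k A ((p : ℕ) : k) := (map_natCast (algebraMap k A) p).symm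
  rw [h, CharP.cast_eq_zero, map_zero]

theorem psmul_zero' (p : ℕ) [CharP k p] (a : A) : p • a = 0 := by
  rw [nsmul_eq_mul, natp_zero k p, zero_mul]

/-- Expansion of `(x+y)^n` as a sum over words. -/
theorem add_pow_expand (x y : A) (n : ℕ) :
    (x + y) ^ n = ∑ f : Fin n → Bool, (List.ofFn fun i => if f i then x else y).prod := by
  induction n with
  | zero => simp
  | succ n ih =>
      have e : ∀ f : Fin (n + 1) → Bool,
          (List.ofFn fun i => if f i then x else y).prod =
            (if f 0 then x else y) *
              (List.ofFn fun i : Fin n => if f i.succ then x else y).prod := by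
        intro f
        rw [List.ofFn_succ, List.prod_cons]
      calc (x + y) ^ (n + 1) = (x + y) * (x + y) ^ n := pow_succ' _ _
        _ = ∑ b : Bool, (if b then x else y) *
              ∑ f : Fin n → Bool, (List.ofFn fun i => if f i then x else y).prod := by
            rw [ih, Fintype.sum_bool]
            simp [add_mul]
        _ = ∑ q : Bool × (Fin n → Bool),
              (if q.1 then x else y) * (List.ofFn fun i => if q.2 i then x else y).prod := by
            rw [Fintype.sum_prod_type]
            exact Finset.sum_congr rfl fun b _ => Finset.mul_sum _ _ _
        _ = ∑ f : Fin (n + 1) → Bool, (List.ofFn fun i => if f i then x else y).prod := by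
            refine (Fintype.sum_equiv (Fin.consEquiv fun _ : Fin (n + 1) => Bool).symm _ _ ?_).symm
            intro f
            rw [e f]
            rfl

/-- The word product indexed by `ZMod p`. -/
def WW {A : Type*} [Ring A] (x y : A) (p : ℕ) (h : ZMod p → Bool) : A :=
  (List.ofFn fun i : Fin p => if h ((i : ℕ) : ZMod p) then x else y).prod

theorem WW_rot {p : ℕ} (hp : p ≠ 0) (x y : A) (h : ZMod p → Bool) :
    WW x y p (fun i => h (i + 1)) - WW x y p h ∈ commutatorSpan k A := by
  obtain ⟨m, rfl⟩ := Nat.exists_eq_succ_of_ne_zero hp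
  set a : A := if h 0 then x else y with ha
  set t : List A :=
    List.ofFn (fun j : Fin m => if h ((((j : ℕ) + 1 : ℕ)) : ZMod (m + 1)) then x else y) with ht
  have e1 : WW x y (m + 1) h = a * t.prod := by
    unfold WW
    rw [List.ofFn_succ, List.prod_cons]
    have h0 : (((0 : Fin (m + 1)) : ℕ) : ZMod (m + 1)) = 0 := by simp
    have hfun : (fun i : Fin m =>
          if h (((i.succ : Fin (m + 1)) : ℕ) : ZMod (m + 1)) then x else y) =
        fun j : Fin m => if h ((((j : ℕ) + 1 : ℕ)) : ZMod (m + 1)) then x else y := by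
      funext j
      rw [Fin.val_succ]
    rw [h0, hfun, ht, ha]
  have e2 : WW x y (m + 1) (fun i => h (i + 1)) = t.prod * a := by
    unfold WW
    beta_reduce
    rw [List.ofFn_succ', List.concat_eq_append, List.prod_append, List.prod_cons,
      List.prod_nil, mul_one]
    have hfun : (fun i : Fin m =>
          if h ((((i.castSucc : Fin (m + 1)) : ℕ) : ZMod (m + 1)) + 1) then x else y) =
        fun j : Fin m => if h ((((j : ℕ) + 1 : ℕ)) : ZMod (m + 1)) then x else y := by
      funext j
      have harg : ((((j.castSucc : Fin (m + 1)) : ℕ) : ZMod (m + 1)) + 1)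
          = ((((j : ℕ) + 1 : ℕ)) : ZMod (m + 1)) := by
        rw [Fin.coe_castSucc]
        push_cast
        ring
      rw [harg]
    have hlast : ((((Fin.last m : ℕ)) : ZMod (m + 1)) + 1) = (0 : ZMod (m + 1)) := by
      rw [Fin.val_last]
      exact ZMod.natCast_self' m
    rw [hfun, hlast, ht, ha]
  rw [e1, e2]
  exact mem_commutatorSpan t.prod a


/-- The key fact: `(x+y)^p ≡ x^p + y^p mod K(A)`. -/
theorem add_pow_p_mem {p : ℕ} [hp : Fact p.Prime] [CharP k p] (x y : A) :
    (x + y) ^ p - (x ^ p + y ^ p) ∈ commutatorSpan k A := by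
  classical
  haveI : NeZero p := ⟨hp.out.ne_zero⟩
  set K := commutatorSpan k A with hK
  set π : A →ₗ[k] A ⧸ K := K.mkQ with hπdef
  have hπ : ∀ u v : A, u - v ∈ K → π u = π v := by
    intro u v huv
    exact (Submodule.Quotient.eq K).mpr huv
  set F : (ZMod p → Bool) → A ⧸ K := fun h => π (WW x y p h) with hF
  -- rotation invariance
  have Frot : ∀ h : ZMod p → Bool, F (fun i => h (i + 1)) = F h := by
    intro h
    exact hπ _ _ (WW_rot hp.out.ne_zero x y h)
  have Frotn : ∀ (n : ℕ) (h : ZMod p → Bool), F (fun i => h (i + (n : ZMod p))) = F h := by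
    intro n
    induction n with
    | zero => intro h; simp
    | succ n ih =>
        intro h
        have e : (fun i : ZMod p => h (i + ((n + 1 : ℕ) : ZMod p))) =
            (fun i : ZMod p => h ((i + 1) + (n : ZMod p))) := by
          funext i
          congr 1
          push_cast
          ring
        rw [e, Frot (fun i' => h (i' + (n : ZMod p))), ih h]
  have Frotz : ∀ (j : ZMod p) (h : ZMod p → Bool), F (fun i => h (i + j)) = F h := by
    intro j h
    have hjv : ((j.val : ℕ) : ZMod p) = j := ZMod.natCast_rightInverse j
    rw [← hjv]
    exact Frotn j.val h
  -- injectivity of the orbit map for nonconstant words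
  have key_inj : ∀ h : ZMod p → Bool, ¬ (∀ i, h i = h 0) →
      Function.Injective (fun j : ZMod p => (fun i => h (i + j))) := by
    intro h hnc j j' heq
    by_contra hne
    set d := j' - j with hdd
    have hdne : d ≠ 0 := fun hz => hne ((sub_eq_zero.mp hz).symm)
    have hd : ∀ i, h i = h (i + d) := by
      intro i
      have h1 := congrFun heq (i - j)
      simp only at h1
      have e1 : i - j + j = i := by ring
      have e2 : i - j + j' = i + d := by rw [hdd]; ring
      rw [e1, e2] at h1
      exact h1
    apply hnc
    have hiter : ∀ (n : ℕ) (i : ZMod p), h (i + n • d) = h i := by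
      intro n
      induction n with
      | zero => intro i; simp
      | succ n ih =>
          intro i
          have e : i + (n + 1) • d = (i + d) + n • d := by
            rw [succ_nsmul]; ring
          rw [e, ih (i + d), ← hd i]
    intro i
    have hsur : ∃ n : ℕ, (n : ZMod p) * d = i := by
      refine ⟨(i * d⁻¹).val, ?_⟩
      rw [ZMod.natCast_rightInverse (i * d⁻¹), mul_assoc, inv_mul_cancel₀ hdne, mul_one]
    obtain ⟨n, hn⟩ := hsur
    have hh := hiter n 0
    rw [zero_add, nsmul_eq_mul, hn] at hh
    exact hh
  -- the orbit of a word
  set orb : (ZMod p → Bool) → Finset (ZMod p → Bool) :=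
    fun h => Finset.image (fun j : ZMod p => (fun i => h (i + j))) Finset.univ with horb
  have orb_mem_self : ∀ h, h ∈ orb h := by
    intro h
    refine Finset.mem_image.mpr ⟨0, Finset.mem_univ _, ?_⟩
    funext i; rw [add_zero]
  have orb_sum : ∀ h : ZMod p → Bool, ¬ (∀ i, h i = h 0) → ∑ g ∈ orb h, F g = 0 := by
    intro h hnc
    rw [horb]
    rw [Finset.sum_image (fun a _ b _ hab => key_inj h hnc hab)]
    rw [Finset.sum_congr rfl (fun j _ => Frotz j h), Finset.sum_const, Finset.card_univ,
      ZMod.card]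
    show (p : ℕ) • π (WW x y p h) = 0
    rw [← map_nsmul, psmul_zero' (k := k), map_zero]
  -- orbits are contained in rotation-closed sets
  have orb_sub : ∀ (h : ZMod p → Bool) (s : Finset (ZMod p → Bool)),
      (∀ g ∈ s, (fun i => g (i + 1)) ∈ s) → h ∈ s → orb h ⊆ s := by
    intro h s hcl hh g hg
    obtain ⟨j, _, hj⟩ := Finset.mem_image.mp hg
    have key : ∀ n : ℕ, (fun i => h (i + (n : ZMod p))) ∈ s := by
      intro n
      induction n with
      | zero => simpa using hh
      | succ n ih =>
          have hmem := hcl _ ih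
          have e : (fun i : ZMod p => h (i + 1 + (n : ZMod p))) =
              (fun i : ZMod p => h (i + ((n + 1 : ℕ) : ZMod p))) := by
            funext i; congr 1; push_cast; ring
          rwa [e] at hmem
    have hmem := key j.val
    rw [show ((j.val : ℕ) : ZMod p) = j from ZMod.natCast_rightInverse j] at hmem
    rwa [hj] at hmem
  -- rotation-closed sets of nonconstant words sum to zero
  have sum_zero : ∀ s : Finset (ZMod p → Bool),
      (∀ g ∈ s, (fun i => g (i + 1)) ∈ s) → (∀ g ∈ s, ¬ (∀ i, g i = g 0)) →
      ∑ g ∈ s, F g = 0 := by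
    intro s
    induction s using Finset.strongInductionOn with
    | _ s ih =>
        intro hcl hnc
        rcases s.eq_empty_or_nonempty with rfl | ⟨h₀, hh₀⟩
        · simp
        · have hsub : orb h₀ ⊆ s := orb_sub h₀ s hcl hh₀
          have hssub : s \ orb h₀ ⊂ s := by
            refine (Finset.ssubset_iff_of_subset Finset.sdiff_subset).mpr ?_
            exact ⟨h₀, hh₀, fun hx => (Finset.mem_sdiff.mp hx).2 (orb_mem_self h₀)⟩
          have hcl' : ∀ g ∈ s \ orb h₀, (fun i => g (i + 1)) ∈ s \ orb h₀ := by
            intro g hg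
            rw [Finset.mem_sdiff] at hg ⊢
            refine ⟨hcl g hg.1, ?_⟩
            intro hmem
            apply hg.2
            obtain ⟨j, _, hj⟩ := Finset.mem_image.mp hmem
            refine Finset.mem_image.mpr ⟨j - 1, Finset.mem_univ _, ?_⟩
            funext i
            have h1 := congrFun hj (i - 1)
            rw [show i - 1 + 1 = i by ring] at h1
            rw [show i + (j - 1) = i - 1 + j by ring, h1]
          have hnc' : ∀ g ∈ s \ orb h₀, ¬ (∀ i, g i = g 0) := fun g hg =>
            hnc g (Finset.mem_sdiff.mp hg).1
          rw [← Finset.sum_sdiff hsub, ih _ hssub hcl' hnc',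
            orb_sum h₀ (hnc h₀ hh₀), add_zero]
  -- reindex from `Fin p → Bool` to `ZMod p → Bool`
  have hbij : Function.Bijective
      (fun (h : ZMod p → Bool) => fun i : Fin p => h ((i : ℕ) : ZMod p)) := by
    rw [Fintype.bijective_iff_injective_and_card]
    constructor
    · intro h h' hhh
      funext z
      have h1 := congrFun hhh ⟨z.val, ZMod.val_lt z⟩
      simp only at h1
      rwa [show (((z.val : ℕ)) : ZMod p) = z from ZMod.natCast_rightInverse z] at h1
    · simp [ZMod.card]
  have reindex : ∑ f : Fin p → Bool, (List.ofFn fun i => if f i then x else y).prod =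
      ∑ h : ZMod p → Bool, WW x y p h :=
    (Fintype.sum_bijective _ hbij (fun h => WW x y p h)
      (fun f => (List.ofFn fun i => if f i then x else y).prod) (fun h => rfl)).symm
  -- the constant words give `x^p` and `y^p`
  have hconst_true : WW x y p (fun _ => true) = x ^ p := by
    unfold WW
    simp [List.prod_replicate]
  have hconst_false : WW x y p (fun _ => false) = y ^ p := by
    unfold WW
    simp [List.prod_replicate]
  have split : ∑ h : ZMod p → Bool, F h = π (x ^ p) + π (y ^ p) := by
    rw [← Finset.sum_filter_add_sum_filter_not Finset.univ
      (fun h : ZMod p → Bool => ∀ i, h i = h 0) F]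
    have h1 : Finset.univ.filter (fun h : ZMod p → Bool => ∀ i, h i = h 0) =
        {fun _ => true, fun _ => false} := by
      ext h
      simp only [Finset.mem_filter, Finset.mem_univ, true_and, Finset.mem_insert,
        Finset.mem_singleton]
      constructor
      · intro hc
        cases hb : h 0
        · right; funext i; rw [hc i, hb]
        · left; funext i; rw [hc i, hb]
      · rintro (rfl | rfl) <;> intro i <;> rfl
    have h2 : ∑ h ∈ Finset.univ.filter (fun h : ZMod p → Bool => ¬ ∀ i, h i = h 0), F h = 0 := by
      refine sum_zero _ ?_ ?_
      · intro g hg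
        rw [Finset.mem_filter] at hg ⊢
        refine ⟨Finset.mem_univ _, ?_⟩
        intro hcrot
        apply hg.2
        intro i
        have hi := hcrot (i - 1)
        have h0 := hcrot (-1)
        simp only at hi h0
        rw [show i - 1 + 1 = i by ring, zero_add] at hi
        rw [show (-1 : ZMod p) + 1 = 0 by ring, zero_add] at h0
        rw [hi, h0]
      · intro g hg
        exact (Finset.mem_filter.mp hg).2
    rw [h2, add_zero, h1]
    have hne : (fun _ : ZMod p => true) ≠ (fun _ : ZMod p => false) := by
      intro hcon
      simpa using congrFun hcon 0
    rw [Finset.sum_pair hne]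
    show π (WW x y p (fun _ => true)) + π (WW x y p (fun _ => false)) = _
    rw [hconst_true, hconst_false]
  -- put everything together
  have main : π ((x + y) ^ p) = π (x ^ p + y ^ p) := by
    calc π ((x + y) ^ p) = ∑ h : ZMod p → Bool, F h := by
          rw [add_pow_expand x y p, reindex, map_sum]
      _ = π (x ^ p) + π (y ^ p) := split
      _ = π (x ^ p + y ^ p) := (map_add π _ _).symm
  have hmain := main
  simp only [hπdef, Submodule.mkQ_apply] at hmain
  exact (Submodule.Quotient.eq K).mp hmain

theorem neg_one_pow_p {p : ℕ} [hp : Fact p.Prime] [CharP k p] : ((-1 : A)) ^ p = -1 := by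
  rcases hp.out.eq_two_or_odd' with h2 | hodd
  · subst h2
    have h2A : ((2 : ℕ) : A) = 0 := natp_zero k 2
    have h11 : (1 : A) + 1 = 0 := by
      rw [← one_add_one_eq_two] at h2A
      exact_mod_cast h2A
    have hneg : (-1 : A) = 1 := neg_eq_of_add_eq_zero_left h11
    rw [neg_one_sq, hneg]
  · exact Odd.neg_one_pow hodd

theorem mul_pow_succ (a b : A) (n : ℕ) : (a * b) ^ (n + 1) = a * ((b * a) ^ n * b) := by
  induction n with
  | zero => simp
  | succ n ih =>
      rw [pow_succ, ih, pow_succ]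
      simp only [mul_assoc]

theorem comm_pow_mem {p : ℕ} [Fact p.Prime] [CharP k p] (a b : A) :
    (a * b - b * a) ^ p ∈ commutatorSpan k A := by
  have h1 := add_pow_p_mem (k := k) (p := p) (a * b) (-(b * a))
  rw [← sub_eq_add_neg] at h1
  have h2 : (-(b * a)) ^ p = -((b * a) ^ p) := by
    rw [neg_pow, neg_one_pow_p (k := k), neg_one_mul]
  rw [h2] at h1
  obtain ⟨m, hm⟩ := Nat.exists_eq_succ_of_ne_zero (Fact.out (p := p.Prime)).ne_zero
  have h3 : (a * b) ^ p + -((b * a) ^ p) ∈ commutatorSpan k A := by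
    rw [hm, mul_pow_succ, pow_succ, ← sub_eq_add_neg]
    have e : (b * a) ^ m * (b * a) = ((b * a) ^ m * b) * a := by rw [mul_assoc]
    rw [e]
    exact mem_commutatorSpan a ((b * a) ^ m * b)
  have h4 := Submodule.add_mem _ h1 h3
  rw [sub_add_cancel] at h4
  exact h4

theorem pow_p_mem {p : ℕ} [hp : Fact p.Prime] [CharP k p] {u : A}
    (hu : u ∈ commutatorSpan k A) : u ^ p ∈ commutatorSpan k A := by
  have hu' : u ∈ Submodule.span k {x : A | ∃ a b : A, x = a * b - b * a} := hu
  clear hu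
  induction hu' using Submodule.span_induction with
  | mem w hw =>
      obtain ⟨a, b, rfl⟩ := hw
      exact comm_pow_mem a b
  | zero =>
      rw [zero_pow hp.out.ne_zero]
      exact Submodule.zero_mem _
  | add w v hw hv ihw ihv =>
      have h := add_pow_p_mem (k := k) (p := p) w v
      have h2 := Submodule.add_mem _ h (Submodule.add_mem _ ihw ihv)
      rw [sub_add_cancel] at h2
      exact h2
  | smul c w hw ihw =>
      rw [smul_pow]
      exact Submodule.smul_mem _ _ ihw

theorem central_mul_mem {z u : A} (hz : ∀ a : A, z * a = a * z)
    (hu : u ∈ commutatorSpan k A) : z * u ∈ commutatorSpan k A := by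
  have hu' : u ∈ Submodule.span k {x : A | ∃ a b : A, x = a * b - b * a} := hu
  clear hu
  induction hu' using Submodule.span_induction with
  | mem w hw =>
      obtain ⟨a, b, rfl⟩ := hw
      have e : z * (a * b - b * a) = (z * a) * b - b * (z * a) := by
        rw [mul_sub]
        congr 1
        · rw [mul_assoc]
        · rw [← mul_assoc, hz b, mul_assoc]
      rw [e]
      exact mem_commutatorSpan (z * a) b
  | zero => rw [mul_zero]; exact Submodule.zero_mem _
  | add w v hw hv ihw ihv => rw [mul_add]; exact Submodule.add_mem _ ihw ihv
  | smul c w hw ihw => rw [mul_smul_comm]; exact Submodule.smul_mem _ _ ihw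

theorem central_pow {z : A} (hz : ∀ a : A, z * a = a * z) (m : ℕ) :
    ∀ a : A, z ^ m * a = a * z ^ m := by
  induction m with
  | zero => intro a; rw [pow_zero, one_mul, mul_one]
  | succ m ih =>
      intro a
      rw [pow_succ, mul_assoc, hz a, ← mul_assoc, ih a, mul_assoc]

theorem Tn_mono {p : ℕ} [Fact p.Prime] [CharP k p] (n : ℕ) :
    (TnSet k p n : Set A) ⊆ TnSet k p (n + 1) := by
  intro x hx
  show x ^ p ^ (n + 1) ∈ commutatorSpan k A
  rw [pow_succ, pow_mul]
  exact pow_p_mem (k := k) hx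

theorem T0_subset_Tn {p : ℕ} [Fact p.Prime] [CharP k p] (n : ℕ) :
    (TnSet k p 0 : Set A) ⊆ TnSet k p n := by
  induction n with
  | zero => exact fun x hx => hx
  | succ n ih => exact fun x hx => Tn_mono n (ih hx)

end Helpers

/-- The Külshammer ideals `T_n^⊥(A)` of a finite-dimensional symmetric algebra over an
algebraically closed field of characteristic `p > 0` form a decreasing chain of ideals of the
center, starting with `Z(A) = K(A)^⊥ = T_0^⊥(A)`. -/
theorem kulshammer_chain
    {k A : Type*} [Field k] [IsAlgClosed k] {p : ℕ} [hp : Fact p.Prime] [CharP k p]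
    [Ring A] [Algebra k A] [FiniteDimensional k A]
    (B : A →ₗ[k] A →ₗ[k] k)
    (hnondeg : ∀ x : A, (∀ y : A, B x y = 0) → x = 0)
    (hsymm : ∀ a b : A, B a b = B b a)
    (hassoc : ∀ a b c : A, B (a * b) c = B a (b * c)) :
    -- `Z(A) = K(A)^⊥`
    perpSet B (commutatorSpan k A : Set A) = Set.center A ∧
    -- `K(A)^⊥ = T_0^⊥(A)`
    perpSet B (commutatorSpan k A : Set A) = perpSet B (TnSet k p 0) ∧
    -- the chain is decreasing
    (∀ n : ℕ, perpSet B (TnSet k p (n + 1)) ⊆ perpSet B (TnSet k p n)) ∧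
    -- each `T_n^⊥(A)` is an ideal of the center `Z(A)`
    (∀ n : ℕ, perpSet B (TnSet k p n) ⊆ Set.center A) ∧
    (∀ n : ℕ, ∀ z ∈ Set.center A, ∀ x ∈ perpSet B (TnSet k p n), z * x ∈ perpSet B (TnSet k p n)) ∧
    (∀ n : ℕ, ∀ x ∈ perpSet B (TnSet k p n), ∀ y ∈ perpSet B (TnSet k p n),
      x + y ∈ perpSet B (TnSet k p n)) ∧
    (∀ n : ℕ, ∀ c : k, ∀ x ∈ perpSet B (TnSet k p n), c • x ∈ perpSet B (TnSet k p n)) := by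
  have hkey : ∀ z a b : A, (B z) (a * b - b * a) = (B (z * a - a * z)) b := by
    intro z a b
    rw [map_sub (B z), map_sub B, LinearMap.sub_apply]
    congr 1
    · exact (hassoc z a b).symm
    · rw [hsymm z (b * a), hassoc b a z, hsymm b (a * z)]
  -- characterization of the perp of K(A)
  have hperpK : ∀ x : A, x ∈ perpSet B (commutatorSpan k A : Set A) ↔
      (∀ a : A, x * a = a * x) := by
    intro x
    constructor
    · intro hx a
      have hz : ∀ b : A, B (x * a - a * x) b = 0 := by
        intro b
        rw [← hkey x a b]
        exact hx _ (mem_commutatorSpan a b)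
      exact sub_eq_zero.mp (hnondeg _ hz)
    · intro hc y hy
      have hy' : y ∈ Submodule.span k {w : A | ∃ a b : A, w = a * b - b * a} := hy
      have hle : Submodule.span k {w : A | ∃ a b : A, w = a * b - b * a} ≤
          LinearMap.ker (B x) := by
        rw [Submodule.span_le]
        rintro w ⟨a, b, rfl⟩
        simp only [SetLike.mem_coe, LinearMap.mem_ker]
        rw [hkey x a b, hc a, sub_self, map_zero, LinearMap.zero_apply]
      exact hle hy'
  have hset0 : TnSet k p 0 = (commutatorSpan k A : Set A) := by
    ext x
    show x ^ p ^ 0 ∈ commutatorSpan k A ↔ _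
    rw [pow_zero, pow_one]
    rfl
  have hanti : ∀ S T : Set A, S ⊆ T → perpSet B T ⊆ perpSet B S :=
    fun S T hST x hx y hy => hx y (hST hy)
  have hcenter : perpSet B (commutatorSpan k A : Set A) = Set.center A := by
    ext z
    constructor
    · intro h
      exact Semigroup.mem_center_iff.mpr fun g => ((hperpK z).mp h g).symm
    · intro h
      exact (hperpK z).mpr fun a => (Semigroup.mem_center_iff.mp h a).symm
  have hperp0 : perpSet B (commutatorSpan k A : Set A) = perpSet B (TnSet k p 0) := by
    rw [hset0]
  have hsubcenter : ∀ n : ℕ, perpSet B (TnSet k p n) ⊆ Set.center A := by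
    intro n
    rw [← hcenter, hperp0]
    exact hanti _ _ (T0_subset_Tn n)
  refine ⟨hcenter, hperp0, ?_, hsubcenter, ?_, ?_, ?_⟩
  · intro n
    exact hanti _ _ (Tn_mono n)
  · -- multiplication by central elements
    intro n z hz x hx
    have hzc : ∀ a : A, z * a = a * z := by
      intro a
      exact (Semigroup.mem_center_iff.mp hz a).symm
    intro w hw
    have hzw : z * w ∈ TnSet k p n := by
      show (z * w) ^ p ^ n ∈ commutatorSpan k A
      have hcom : Commute z w := hzc w
      rw [hcom.mul_pow]
      exact central_mul_mem (central_pow hzc (p ^ n)) hw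
    have he : B (z * x) w = B x (z * w) := by
      rw [show z * x = x * z from hzc x, hassoc x z w]
    rw [he]
    exact hx _ hzw
  · intro n x hx y hy w hw
    show B (x + y) w = 0
    rw [map_add, LinearMap.add_apply, hx w hw, hy w hw, add_zero]
  · intro n c x hx w hw
    show B (c • x) w = 0
    rw [map_smul, LinearMap.smul_apply, hx w hw, smul_zero]
end

section
/- Let $G$ be a finite group, $k$ an algebraically closed field of characteristic $p>0$, and $kG$ the group algebra with the symmetrizing form $(g,h)=\delta_{g,h^{-1}}$. Then for every $n\ge 0$, the Külshammer ideal $T_n^\perp(kG)$ has $k$-basis $\{(C^{p^{-n}})^+ : C \in \mathcal{C}l(G)\}$ where $C^{p^{-n}}=\{g\in G : g^{p^n}\in C\}$ and $X^+=\sum_{x\in X}x$ (omitting the zero elements corresponding to classes $C$ with $C^{p^{-n}}=\emptyset$). -/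
open scoped Classical

/-- The symmetrizing form of a group algebra: `(x, y) ↦` the coefficient of `1` in `x * y`;
on group elements this is `(g, h) = δ_{g, h⁻¹}`. -/
noncomputable def groupForm {k G : Type*} [Field k] [Group G]
    (x y : MonoidAlgebra k G) : k := (x * y).coeff 1

/-- The sum `(C^{p^{-n}})^+ = ∑_{g : g^{p^n} ∈ C} g` in the group algebra,
for a conjugacy class `C` of `G`. -/
noncomputable def classRootSum (k : Type*) {G : Type*} [Field k] [Group G] [Fintype G]
    (p n : ℕ) (C : ConjClasses G) : MonoidAlgebra k G :=
  ∑ g ∈ Finset.univ.filter (fun g : G => ConjClasses.mk (g ^ p ^ n) = C),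
    MonoidAlgebra.single g (1 : k)

set_option linter.unusedSectionVars false

lemma sum_eq_sum_fixed {k : Type*} [Field k] {p : ℕ} [Fact p.Prime] [CharP k p]
    {α M : Type*} [Fintype α] [AddCommGroup M] [Module k M]
    (f : α → α) [DecidablePred fun a => f a = a] {N : ℕ} (hfN : f^[p ^ N] = id)
    (F : α → M) (hF : ∀ a, F (f a) = F a) :
    ∑ a : α, F a = ∑ a ∈ Finset.univ.filter (fun a => f a = a), F a := by
  have hppos : 0 < p ^ N := pow_pos (Nat.Prime.pos Fact.out) N
  have hper : ∀ a, Function.IsPeriodicPt f (p ^ N) a := by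
    intro a; unfold Function.IsPeriodicPt Function.IsFixedPt; rw [hfN]; rfl
  have hleft : ∀ b, f^[p ^ N - 1] (f b) = b := by
    intro b
    rw [← Function.iterate_succ_apply]
    have he : (p ^ N - 1).succ = p ^ N := Nat.succ_pred_eq_of_pos hppos
    rw [he, hfN]; rfl
  have hinj : Function.Injective f := Function.LeftInverse.injective hleft
  have hFiter : ∀ (j : ℕ) a, F (f^[j] a) = F a := by
    intro j a; induction j with
    | zero => rfl
    | succ j ih => rw [Function.iterate_succ_apply', hF, ih]
  have key : ∀ s : Finset α, (∀ a ∈ s, f a ∈ s) →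
      ∑ a ∈ s, F a = ∑ a ∈ s.filter (fun a => f a = a), F a := by
    intro s
    induction s using Finset.strongInduction with
    | _ s ih =>
      intro hs
      rcases s.eq_empty_or_nonempty with rfl | ⟨a, ha⟩
      · simp
      · set d := Function.minimalPeriod f a with hd
        have hdvd : d ∣ p ^ N := (hper a).minimalPeriod_dvd
        have hdpos : 0 < d := Function.IsPeriodicPt.minimalPeriod_pos hppos (hper a)
        set O : Finset α := (Finset.range d).image (fun i => f^[i] a) with hO
        have haO : a ∈ O := Finset.mem_image.2 ⟨0, Finset.mem_range.2 hdpos, rfl⟩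
        have hOmem : ∀ (j : ℕ), f^[j] a ∈ O := by
          intro j
          refine Finset.mem_image.2 ⟨j % d, Finset.mem_range.2 (Nat.mod_lt _ hdpos), ?_⟩
          exact Function.iterate_mod_minimalPeriod_eq
        have hOs : O ⊆ s := by
          intro b hb
          rcases Finset.mem_image.1 hb with ⟨i, hi, rfl⟩
          clear hb hi
          induction i with
          | zero => exact ha
          | succ i ihi => rw [Function.iterate_succ_apply']; exact hs _ ihi
        have hOinv : ∀ b ∈ s \ O, f b ∈ s \ O := by
          intro b hb
          rcases Finset.mem_sdiff.1 hb with ⟨hbs, hbO⟩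
          refine Finset.mem_sdiff.2 ⟨hs _ hbs, ?_⟩
          intro hfbO
          rcases Finset.mem_image.1 hfbO with ⟨i, _, hi⟩
          apply hbO
          have hb' : b = f^[p ^ N - 1] (f b) := (hleft b).symm
          rw [hb', ← hi, ← Function.iterate_add_apply]
          exact hOmem _
        have hsplit : s = O ∪ (s \ O) := (Finset.union_sdiff_of_subset hOs).symm
        have hdisj : Disjoint O (s \ O) := Finset.disjoint_sdiff
        have hOcard : ∑ b ∈ O, F b = d • F a := by
          rw [hO, Finset.sum_image ?inj]
          · rw [Finset.sum_congr rfl (fun i _ => hFiter i a)]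
            simp
          · intro i hi j hj hij
            exact Function.iterate_injOn_Iio_minimalPeriod
              (Set.mem_Iio.2 (Finset.mem_range.1 hi)) (Set.mem_Iio.2 (Finset.mem_range.1 hj)) hij
        have hrec : ∑ b ∈ s \ O, F b = ∑ b ∈ (s \ O).filter (fun b => f b = b), F b :=
          ih (s \ O) (Finset.sdiff_ssubset hOs ⟨a, haO⟩) hOinv
        have horbit : ∑ b ∈ O, F b = ∑ b ∈ O.filter (fun b => f b = b), F b := by
          by_cases hfa : f a = a
          · have hOa : O = {a} := by
              apply Finset.eq_singleton_iff_unique_mem.2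
              refine ⟨haO, ?_⟩
              intro b hb
              rcases Finset.mem_image.1 hb with ⟨i, hi, rfl⟩
              clear hb hi
              induction i with
              | zero => rfl
              | succ i ihi => rw [Function.iterate_succ_apply, hfa, ihi]
            rw [hOa]
            rw [Finset.filter_singleton, if_pos hfa]
          · have hnofix : O.filter (fun b => f b = b) = ∅ := by
              apply Finset.filter_false_of_mem
              intro b hb hfb
              rcases Finset.mem_image.1 hb with ⟨i, _, rfl⟩
              apply hfa
              have h2 : f^[i] (f a) = f^[i] a := by
                rw [← Function.iterate_succ_apply, Function.iterate_succ_apply', hfb]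
              exact Function.Injective.iterate hinj i h2
            have hd1 : d ≠ 1 := by
              intro h1
              apply hfa
              have h2 := Function.isPeriodicPt_minimalPeriod f a
              rw [← hd, h1] at h2
              exact h2
            have hpd : (p : ℕ) ∣ d := by
              rcases (Nat.dvd_prime_pow Fact.out).1 hdvd with ⟨j, hj, hdj⟩
              have hj0 : j ≠ 0 := by rintro rfl; rw [pow_zero] at hdj; exact hd1 hdj
              rw [hdj]
              exact dvd_pow_self p hj0
            rw [hnofix, Finset.sum_empty, hOcard, ← Nat.cast_smul_eq_nsmul k,
              (CharP.cast_eq_zero_iff k p d).2 hpd, zero_smul]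
        rw [hsplit, Finset.sum_union hdisj, Finset.filter_union, Finset.sum_union
          (Finset.disjoint_filter_filter hdisj), horbit, hrec]
  have h := key Finset.univ (fun a _ => Finset.mem_univ (f a))
  exact h

section
variable {k G : Type*} [Field k] [Group G] [Fintype G]
open Fin.NatCast

lemma ma_decomp (x : MonoidAlgebra k G) : x = ∑ g : G, MonoidAlgebra.single g (x.coeff g) := by
  ext h
  rw [MonoidAlgebra.coeff_sum, Finset.sum_apply']
  simp [Finsupp.single_apply, MonoidAlgebra.coeff_single_apply]


lemma ma_sum_apply {ι : Type*} (s : Finset ι) (f : ι → MonoidAlgebra k G) (g : G) :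
    (∑ i ∈ s, f i).coeff g = ∑ i ∈ s, (f i).coeff g := by
  rw [MonoidAlgebra.coeff_sum]; exact Finset.sum_apply' g

lemma ma_sub_apply (a b : MonoidAlgebra k G) (g : G) : (a - b).coeff g = a.coeff g - b.coeff g :=
  by rw [MonoidAlgebra.coeff_sub]; rfl

lemma ma_add_apply (a b : MonoidAlgebra k G) (g : G) : (a + b).coeff g = a.coeff g + b.coeff g :=
  by rw [MonoidAlgebra.coeff_add]; rfl

lemma ma_smul_apply (c : k) (a : MonoidAlgebra k G) (g : G) : (c • a).coeff g = c * a.coeff g := by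
  have h : (c • a).coeff g = c • a.coeff g := MonoidAlgebra.coeff_smul_apply c a g
  rw [h, smul_eq_mul]

lemma ma_single_sum {ι : Type*} (s : Finset ι) (a : G) (f : ι → k) :
    MonoidAlgebra.single a (∑ i ∈ s, f i) = ∑ i ∈ s, MonoidAlgebra.single a (f i) :=
  map_sum (MonoidAlgebra.singleAddHom a) f s

lemma sum_pow_expand (m : ℕ) (f : G → MonoidAlgebra k G) :
    (∑ g : G, f g) ^ m = ∑ w : Fin m → G, (List.ofFn (fun i => f (w i))).prod := by
  induction m with
  | zero => simp
  | succ m ih =>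
    rw [pow_succ', ih, Finset.sum_mul_sum,
      ← Equiv.sum_comp (Fin.consEquiv (fun _ : Fin (m + 1) => G))
        (fun w => (List.ofFn (fun i => f (w i))).prod), Fintype.sum_prod_type]
    refine Finset.sum_congr rfl (fun g _ => Finset.sum_congr rfl (fun w _ => ?_))
    simp only [Fin.consEquiv, Equiv.coe_fn_mk]
    rw [List.ofFn_succ, List.prod_cons]
    simp [Fin.cons_zero, Fin.cons_succ]

lemma list_prod_single : ∀ (m : ℕ) (w : Fin m → G) (c : Fin m → k),
    (List.ofFn (fun i => MonoidAlgebra.single (w i) (c i))).prod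
      = MonoidAlgebra.single ((List.ofFn w).prod) (∏ i, c i)
  | 0, w, c => by simp [MonoidAlgebra.one_def]
  | (m + 1), w, c => by
    rw [List.ofFn_succ, List.prod_cons, list_prod_single m (fun i => w i.succ)
        (fun i => c i.succ),
      List.ofFn_succ (f := w), List.prod_cons, MonoidAlgebra.single_mul_single,
      Fin.prod_univ_succ]

lemma rot_prod_exists (m : ℕ) [NeZero m] (w : Fin m → G) :
    ∃ u t : G, (List.ofFn w).prod = u * t ∧ (List.ofFn (fun i => w (i + 1))).prod = t * u := by
  rcases m with _ | m
  · exact absurd rfl (NeZero.ne 0)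
  refine ⟨w 0, (List.ofFn (fun i : Fin m => w i.succ)).prod, ?_, ?_⟩
  · rw [List.ofFn_succ, List.prod_cons]
  · have h : (List.ofFn (fun i : Fin (m + 1) => w (i + 1)))
        = (List.ofFn (fun i : Fin m => w i.succ)).concat (w 0) := by
      rw [List.ofFn_succ']
      congr 1
      · congr 1
        funext i
        rw [Fin.coeSucc_eq_succ]
      · rw [Fin.last_add_one]
    rw [h, List.prod_concat]

lemma rot_iterate (m : ℕ) [NeZero m] (j : ℕ) (w : Fin m → G) :
    (fun (v : Fin m → G) (i : Fin m) => v (i + 1))^[j] w = fun i => w (i + (j : Fin m)) := by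
  induction j with
  | zero => simp
  | succ j ih =>
    rw [Function.iterate_succ_apply', ih]
    funext i
    show w ((i + 1) + (j : Fin m)) = w (i + ((j : ℕ) + 1 : ℕ))
    rw [Nat.cast_add, Nat.cast_one]
    congr 1
    rw [add_assoc, add_comm 1]

lemma rot_pow_id (m : ℕ) [NeZero m] :
    (fun (v : Fin m → G) (i : Fin m) => v (i + 1))^[m] = id := by
  funext w
  rw [rot_iterate]
  funext i
  rw [Fin.natCast_self, add_zero]
  rfl

lemma rot_fixed (m : ℕ) [NeZero m] (w : Fin m → G)
    (h : (fun i : Fin m => w (i + 1)) = w) : ∀ i, w i = w 0 := by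
  have key : ∀ j : ℕ, w ((j : ℕ) : Fin m) = w 0 := by
    intro j
    induction j with
    | zero => rw [Nat.cast_zero]
    | succ j ih =>
      rw [Nat.cast_add, Nat.cast_one, ← ih]
      exact congrFun h ((j : ℕ) : Fin m)
  intro i
  have h2 := key i.val
  rwa [Fin.cast_val_eq_self] at h2

lemma comm_mem (u t : G) : MonoidAlgebra.single (u * t) (1 : k) - MonoidAlgebra.single (t * u) 1
    ∈ commutatorSpan k (MonoidAlgebra k G) := by
  apply Submodule.subset_span
  refine ⟨MonoidAlgebra.single u 1, MonoidAlgebra.single t 1, ?_⟩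
  rw [MonoidAlgebra.single_mul_single, MonoidAlgebra.single_mul_single, one_mul]

lemma q_single_comm (u t : G) :
    (commutatorSpan k (MonoidAlgebra k G)).mkQ (MonoidAlgebra.single (u * t) 1)
      = (commutatorSpan k (MonoidAlgebra k G)).mkQ (MonoidAlgebra.single (t * u) 1) := by
  rw [Submodule.mkQ_apply, Submodule.mkQ_apply]
  exact (Submodule.Quotient.eq _).2 (comm_mem u t)

end

section
variable {k G : Type*} [Field k] [Group G] [Fintype G] {p : ℕ} [Fact p.Prime] [CharP k p]

lemma mkQ_pow (p n : ℕ) [Fact p.Prime] [CharP k p] (y : MonoidAlgebra k G) :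
    (commutatorSpan k (MonoidAlgebra k G)).mkQ (y ^ p ^ n)
      = ∑ g : G, ((y.coeff g) ^ p ^ n) •
          (commutatorSpan k (MonoidAlgebra k G)).mkQ (MonoidAlgebra.single (g ^ p ^ n) 1) := by
  haveI : NeZero (p ^ n) := ⟨pow_ne_zero n (Nat.Prime.ne_zero Fact.out)⟩
  set m := p ^ n with hm
  set q := (commutatorSpan k (MonoidAlgebra k G)).mkQ with hq
  set F : (Fin m → G) → _ :=
    fun w => (∏ i, y.coeff (w i)) • q (MonoidAlgebra.single ((List.ofFn w).prod) (1 : k)) with hF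
  have h1 : y ^ m = ∑ w : Fin m → G,
      (∏ i, y.coeff (w i)) • MonoidAlgebra.single ((List.ofFn w).prod) (1 : k) := by
    conv_lhs => rw [ma_decomp y]
    rw [sum_pow_expand m (fun g => MonoidAlgebra.single g (y.coeff g))]
    refine Finset.sum_congr rfl (fun w _ => ?_)
    rw [list_prod_single m w (fun i => y.coeff (w i)), MonoidAlgebra.smul_single', mul_one]
  have h2 : q (y ^ m) = ∑ w : Fin m → G, F w := by
    rw [h1, map_sum]
    exact Finset.sum_congr rfl (fun w _ => map_smul q _ _)
  have hinv : ∀ w : Fin m → G, F ((fun (v : Fin m → G) (i : Fin m) => v (i + 1)) w) = F w := by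
    intro w
    obtain ⟨u, t, hut, htu⟩ := rot_prod_exists m w
    show (∏ i, y.coeff (w (i + 1))) • q (MonoidAlgebra.single ((List.ofFn fun i => w (i + 1)).prod) 1)
      = (∏ i, y.coeff (w i)) • q (MonoidAlgebra.single ((List.ofFn w).prod) 1)
    rw [hut, htu, q_single_comm t u]
    congr 1
    exact Equiv.prod_comp (Equiv.addRight (1 : Fin m)) (fun j => y.coeff (w j))
  have h3 := sum_eq_sum_fixed (k := k) (M := MonoidAlgebra k G ⧸ commutatorSpan k (MonoidAlgebra k G))
    (fun (v : Fin m → G) (i : Fin m) => v (i + 1)) (N := n) (by rw [← hm]; exact rot_pow_id m)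
    F hinv
  have h4 : ∀ g : G, F (fun _ : Fin m => g) = (y.coeff g) ^ m • q (MonoidAlgebra.single (g ^ m) 1) := by
    intro g
    show (∏ _i : Fin m, y.coeff g) • q (MonoidAlgebra.single ((List.ofFn fun _ : Fin m => g).prod) 1) = _
    rw [Finset.prod_const, Finset.card_univ, Fintype.card_fin, List.ofFn_const,
      List.prod_replicate]
  rw [h2, h3]
  refine Finset.sum_nbij' (i := fun w : Fin m → G => w 0) (j := fun g : G => (fun _ : Fin m => g))
    (fun a _ => Finset.mem_univ _) ?_ ?_ ?_ ?_
  · intro g _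
    refine Finset.mem_filter.2 ⟨Finset.mem_univ _, rfl⟩
  · intro w hw
    have hfix := (Finset.mem_filter.1 hw).2
    funext i
    exact (rot_fixed m w hfix i).symm
  · intro g _
    rfl
  · intro w hw
    have hfix := (Finset.mem_filter.1 hw).2
    have hconst : w = (fun _ : Fin m => w 0) := funext (fun i => rot_fixed m w hfix i)
    rw [show F w = F (fun _ : Fin m => w 0) by rw [← hconst], h4]

end

section
variable {k G : Type*} [Field k] [Group G] [Fintype G]

lemma isConj_inv {a b : G} (h : IsConj a b) : IsConj a⁻¹ b⁻¹ := by
  rcases isConj_iff.1 h with ⟨c, rfl⟩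
  exact isConj_iff.2 ⟨c, by group⟩

lemma mk_mul_comm (u v : G) : ConjClasses.mk (u * v) = ConjClasses.mk (v * u) :=
  ConjClasses.mk_eq_mk_iff_isConj.2 (isConj_iff.2 ⟨v, by group⟩)

lemma phi_mul (a b : MonoidAlgebra k G) (C : ConjClasses G) :
    ∑ g ∈ Finset.univ.filter (fun g : G => ConjClasses.mk g = C), (a * b).coeff g
      = ∑ u : G, ∑ v : G, if ConjClasses.mk (u * v) = C then a.coeff u * b.coeff v else 0 := by
  have hab : a * b = ∑ u : G, ∑ v : G, MonoidAlgebra.single (u * v) (a.coeff u * b.coeff v) := by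
    conv_lhs => rw [ma_decomp a, ma_decomp b]
    rw [Finset.sum_mul_sum]
    exact Finset.sum_congr rfl fun u _ => Finset.sum_congr rfl fun v _ =>
      MonoidAlgebra.single_mul_single ..
  rw [hab]
  simp only [ma_sum_apply]
  rw [Finset.sum_comm]
  refine Finset.sum_congr rfl fun u _ => ?_
  rw [Finset.sum_comm]
  refine Finset.sum_congr rfl fun v _ => ?_
  simp [Finsupp.single_apply, MonoidAlgebra.coeff_single_apply, Finset.sum_ite_eq, Finset.mem_filter]

lemma single_sub_single_mem {s t : G} (h : IsConj s t) (c : k) :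
    MonoidAlgebra.single t c - MonoidAlgebra.single s c
      ∈ commutatorSpan k (MonoidAlgebra k G) := by
  rcases isConj_iff.1 h with ⟨d, hd⟩
  apply Submodule.subset_span
  refine ⟨MonoidAlgebra.single d c, MonoidAlgebra.single (s * d⁻¹) 1, ?_⟩
  rw [MonoidAlgebra.single_mul_single, MonoidAlgebra.single_mul_single, mul_one, one_mul]
  congr 2
  · rw [← hd]; group
  · group

lemma mem_commutatorSpan_iff (x : MonoidAlgebra k G) :
    x ∈ commutatorSpan k (MonoidAlgebra k G) ↔
      ∀ C : ConjClasses G,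
        ∑ g ∈ Finset.univ.filter (fun g : G => ConjClasses.mk g = C), x.coeff g = 0 := by
  constructor
  · intro hx C
    refine Submodule.span_induction ?_ ?_ ?_ ?_ hx
    · rintro z ⟨a, b, rfl⟩
      simp only [ma_sub_apply, Finset.sum_sub_distrib]
      rw [phi_mul a b C, phi_mul b a C]
      rw [Finset.sum_comm (f := fun u v => if ConjClasses.mk (u * v) = C then b.coeff u * a.coeff v else 0)]
      rw [sub_eq_zero]
      refine Finset.sum_congr rfl fun u _ => Finset.sum_congr rfl fun v _ => ?_
      rw [mk_mul_comm u v, mul_comm (a.coeff u) (b.coeff v)]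
    · simp
    · intro z w _ _ hz hw
      simp only [ma_add_apply, Finset.sum_add_distrib, hz, hw, add_zero]
    · intro c z _ hz
      simp only [ma_smul_apply, ← Finset.mul_sum, hz, mul_zero]
  · intro h
    have hrep : ∀ C : ConjClasses G, ConjClasses.mk C.exists_rep.choose = C :=
      fun C => C.exists_rep.choose_spec
    have hx : x = (∑ g : G, (MonoidAlgebra.single g (x.coeff g)
          - MonoidAlgebra.single ((ConjClasses.mk g).exists_rep.choose) (x.coeff g)))
        + ∑ g : G, MonoidAlgebra.single ((ConjClasses.mk g).exists_rep.choose) (x.coeff g) := by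
      rw [Finset.sum_sub_distrib, sub_add_cancel]
      exact ma_decomp x
    rw [hx]
    refine Submodule.add_mem _ (Submodule.sum_mem _ fun g _ => ?_) ?_
    · refine single_sub_single_mem ?_ (x.coeff g)
      exact ConjClasses.mk_eq_mk_iff_isConj.1 (hrep (ConjClasses.mk g))
    · have hzero : (∑ g : G, MonoidAlgebra.single
          ((ConjClasses.mk g).exists_rep.choose) (x.coeff g) : MonoidAlgebra k G) = 0 := by
        rw [← Finset.sum_fiberwise Finset.univ (fun g : G => ConjClasses.mk g)
          (fun g => MonoidAlgebra.single ((ConjClasses.mk g).exists_rep.choose) (x.coeff g))]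
        refine Finset.sum_eq_zero fun C _ => ?_
        have : ∀ g ∈ Finset.univ.filter (fun g : G => ConjClasses.mk g = C),
            MonoidAlgebra.single ((ConjClasses.mk g).exists_rep.choose) (x.coeff g)
              = MonoidAlgebra.single (C.exists_rep.choose) (x.coeff g) := by
          intro g hg
          rw [(Finset.mem_filter.1 hg).2]
        rw [Finset.sum_congr rfl this, ← ma_single_sum, h C]
        exact MonoidAlgebra.single_zero _
      rw [hzero]
      exact Submodule.zero_mem _
end

section
variable {k G : Type*} [Field k] [Group G] [Fintype G] {p : ℕ} [Fact p.Prime] [CharP k p]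

lemma pow_mem_commutatorSpan_iff (n : ℕ) (y : MonoidAlgebra k G) :
    y ^ p ^ n ∈ commutatorSpan k (MonoidAlgebra k G) ↔
      ∀ C : ConjClasses G,
        ∑ g ∈ Finset.univ.filter (fun g : G => ConjClasses.mk (g ^ p ^ n) = C), y.coeff g = 0 := by
  have hm0 : p ^ n ≠ 0 := pow_ne_zero n (Nat.Prime.ne_zero Fact.out)
  set K := commutatorSpan k (MonoidAlgebra k G) with hK
  set w : MonoidAlgebra k G := ∑ g : G, MonoidAlgebra.single (g ^ p ^ n) ((y.coeff g) ^ p ^ n)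
    with hw
  have hq : K.mkQ (y ^ p ^ n) = K.mkQ w := by
    rw [mkQ_pow p n y, hw, map_sum]
    refine Finset.sum_congr rfl fun g _ => ?_
    rw [show MonoidAlgebra.single (g ^ p ^ n) ((y.coeff g) ^ p ^ n)
        = ((y.coeff g) ^ p ^ n) • MonoidAlgebra.single (g ^ p ^ n) (1 : k) by
      rw [MonoidAlgebra.smul_single', mul_one], map_smul]
  have h1 : y ^ p ^ n ∈ K ↔ w ∈ K := by
    constructor
    · intro h
      have h2 : K.mkQ w = 0 := by
        rw [← hq, Submodule.mkQ_apply, Submodule.Quotient.mk_eq_zero]; exact h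
      rwa [Submodule.mkQ_apply, Submodule.Quotient.mk_eq_zero] at h2
    · intro h
      have h2 : K.mkQ (y ^ p ^ n) = 0 := by
        rw [hq, Submodule.mkQ_apply, Submodule.Quotient.mk_eq_zero]; exact h
      rwa [Submodule.mkQ_apply, Submodule.Quotient.mk_eq_zero] at h2
  rw [h1, mem_commutatorSpan_iff]
  have hwsum : ∀ C : ConjClasses G,
      ∑ t ∈ Finset.univ.filter (fun t : G => ConjClasses.mk t = C), w.coeff t
        = (∑ g ∈ Finset.univ.filter (fun g : G => ConjClasses.mk (g ^ p ^ n) = C), y.coeff g)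
            ^ p ^ n := by
    intro C
    rw [sum_pow_char_pow]
    rw [hw]
    simp only [ma_sum_apply]
    rw [Finset.sum_comm]
    rw [Finset.sum_filter (fun g : G => ConjClasses.mk (g ^ p ^ n) = C) (fun g => y.coeff g ^ p ^ n)]
    refine Finset.sum_congr rfl fun g _ => ?_
    simp [Finsupp.single_apply, MonoidAlgebra.coeff_single_apply, Finset.sum_ite_eq, Finset.mem_filter]
  constructor
  · intro h C
    have := h C
    rw [hwsum C] at this
    exact pow_eq_zero_iff hm0 |>.1 this
  · intro h C
    rw [hwsum C, h C, zero_pow hm0]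

lemma classRootSum_apply (n : ℕ) (C : ConjClasses G) (h : G) :
    (classRootSum k p n C).coeff h = if ConjClasses.mk (h ^ p ^ n) = C then 1 else 0 := by
  rw [classRootSum, ma_sum_apply]
  simp [Finsupp.single_apply, MonoidAlgebra.coeff_single_apply, Finset.sum_ite_eq', Finset.mem_filter]

lemma groupForm_classRootSum (n : ℕ) (C : ConjClasses G) (y : MonoidAlgebra k G) :
    groupForm (classRootSum k p n C) y
      = ∑ g ∈ Finset.univ.filter (fun g : G => ConjClasses.mk (g ^ p ^ n) = C), y.coeff g⁻¹ := by
  rw [groupForm, classRootSum, Finset.sum_mul, ma_sum_apply]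
  refine Finset.sum_congr rfl fun g _ => ?_
  rw [MonoidAlgebra.coeff_single_mul_apply, one_mul, mul_one]

end

/-- For a finite group `G` and an algebraically closed field `k` of characteristic `p > 0`,
the Külshammer ideal `T_n^⊥(kG)` is spanned by the elements `(C^{p^{-n}})^+` over the
conjugacy classes `C` of `G`, and the nonzero such elements are linearly independent, i.e.
they form a `k`-basis of `T_n^⊥(kG)`. -/
theorem kulshammer_ideal_basis_groupAlgebra
    {k : Type*} [Field k] [IsAlgClosed k] {p : ℕ} [Fact p.Prime] [CharP k p]
    {G : Type*} [Group G] [Fintype G] (n : ℕ) :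
    {x : MonoidAlgebra k G | ∀ y : MonoidAlgebra k G,
        y ^ p ^ n ∈ commutatorSpan k (MonoidAlgebra k G) → groupForm x y = 0}
      = ↑(Submodule.span k (Set.range (classRootSum k p n : ConjClasses G → MonoidAlgebra k G))) ∧
    LinearIndependent k
      (fun C : {C : ConjClasses G // classRootSum k p n C ≠ 0} => classRootSum k p n C.1) := by
  haveI : Fintype (ConjClasses G) := Fintype.ofFinite _
  constructor
  · ext x
    simp only [Set.mem_setOf_eq, SetLike.mem_coe]
    constructor
    · intro hx
      -- x is constant on the fibers of g ↦ mk (g ^ p ^ n)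
      have hconst : ∀ g g' : G,
          ConjClasses.mk (g ^ p ^ n) = ConjClasses.mk (g' ^ p ^ n) → x.coeff g = x.coeff g' := by
        intro g g' hgg
        have hmkinv : ConjClasses.mk ((g⁻¹) ^ p ^ n) = ConjClasses.mk ((g'⁻¹) ^ p ^ n) := by
          rw [inv_pow, inv_pow]
          exact ConjClasses.mk_eq_mk_iff_isConj.2
            (isConj_inv (ConjClasses.mk_eq_mk_iff_isConj.1 hgg))
        have hy : (MonoidAlgebra.single g⁻¹ (1 : k) - MonoidAlgebra.single g'⁻¹ 1) ^ p ^ n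
            ∈ commutatorSpan k (MonoidAlgebra k G) := by
          apply (pow_mem_commutatorSpan_iff n _).2
          intro C
          simp only [ma_sub_apply, Finset.sum_sub_distrib]
          have e1 : ∀ a : G,
              ∑ h ∈ Finset.univ.filter (fun h : G => ConjClasses.mk (h ^ p ^ n) = C),
                (MonoidAlgebra.single a (1 : k)).coeff h
              = if ConjClasses.mk (a ^ p ^ n) = C then (1 : k) else 0 := by
            intro a
            simp [Finsupp.single_apply, MonoidAlgebra.coeff_single_apply, Finset.sum_ite_eq', Finset.mem_filter]
          rw [e1 g⁻¹, e1 g'⁻¹, hmkinv, sub_self]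
        have h0 := hx _ hy
        rw [groupForm, mul_sub] at h0
        rw [ma_sub_apply] at h0
        rw [MonoidAlgebra.coeff_mul_single_apply, MonoidAlgebra.coeff_mul_single_apply] at h0
        simp only [one_mul, mul_one, inv_inv] at h0
        exact sub_eq_zero.1 h0
      set c : ConjClasses G → k := fun C =>
        if hc : (Finset.univ.filter (fun g : G => ConjClasses.mk (g ^ p ^ n) = C)).Nonempty
        then x.coeff hc.choose else 0 with hcdef
      have hxc : x = ∑ C : ConjClasses G, c C • classRootSum k p n C := by
        conv_lhs => rw [ma_decomp x]
        rw [← Finset.sum_fiberwise Finset.univ (fun g : G => ConjClasses.mk (g ^ p ^ n))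
          (fun g => MonoidAlgebra.single g (x.coeff g))]
        refine Finset.sum_congr rfl fun C _ => ?_
        rw [classRootSum, Finset.smul_sum]
        refine Finset.sum_congr rfl fun g hg => ?_
        have hgC : ConjClasses.mk (g ^ p ^ n) = C := (Finset.mem_filter.1 hg).2
        have hne : (Finset.univ.filter
            (fun g : G => ConjClasses.mk (g ^ p ^ n) = C)).Nonempty := ⟨g, hg⟩
        rw [MonoidAlgebra.smul_single', mul_one]
        congr 1
        rw [hcdef]
        simp only [dif_pos hne]
        exact hconst g hne.choose
          (by rw [hgC, (Finset.mem_filter.1 hne.choose_spec).2])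
      rw [hxc]
      exact Submodule.sum_mem _ fun C _ =>
        Submodule.smul_mem _ _ (Submodule.subset_span ⟨C, rfl⟩)
    · intro hx y hy
      refine Submodule.span_induction (p := fun z _ => groupForm z y = 0) ?_ ?_ ?_ ?_ hx
      · rintro z ⟨C, rfl⟩
        rw [groupForm_classRootSum]
        obtain ⟨r, hr⟩ := C.exists_rep
        have hC := (pow_mem_commutatorSpan_iff n y).1 hy (ConjClasses.mk r⁻¹)
        rw [← hC]
        refine Finset.sum_nbij' (i := fun g : G => g⁻¹) (j := fun h : G => h⁻¹)
          ?_ ?_ ?_ ?_ ?_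
        · intro a ha
          refine Finset.mem_filter.2 ⟨Finset.mem_univ _, ?_⟩
          have h1 : ConjClasses.mk (a ^ p ^ n) = ConjClasses.mk r := by
            rw [hr]; exact (Finset.mem_filter.1 ha).2
          rw [inv_pow]
          exact ConjClasses.mk_eq_mk_iff_isConj.2
            (isConj_inv (ConjClasses.mk_eq_mk_iff_isConj.1 h1))
        · intro a ha
          refine Finset.mem_filter.2 ⟨Finset.mem_univ _, ?_⟩
          have h1 : ConjClasses.mk (a ^ p ^ n) = ConjClasses.mk r⁻¹ :=
            (Finset.mem_filter.1 ha).2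
          rw [← hr]
          have h2 := isConj_inv (ConjClasses.mk_eq_mk_iff_isConj.1 h1)
          rw [inv_inv] at h2
          rw [inv_pow]
          exact ConjClasses.mk_eq_mk_iff_isConj.2 h2
        · intro a _; exact inv_inv a
        · intro a _; exact inv_inv a
        · intro a _; rfl
      · show ((0 : MonoidAlgebra k G) * y).coeff 1 = 0
        rw [zero_mul]; rfl
      · intro z w _ _ hz hw
        rw [groupForm, add_mul, ma_add_apply]
        rw [groupForm] at hz hw
        rw [hz, hw, add_zero]
      · intro a z _ hz
        rw [groupForm, smul_mul_assoc, ma_smul_apply]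
        rw [groupForm] at hz
        rw [hz, mul_zero]
  · haveI : Fintype {C : ConjClasses G // classRootSum k p n C ≠ 0} := Fintype.ofFinite _
    apply Fintype.linearIndependent_iff.2
    intro c hc i
    obtain ⟨C, hCne⟩ := i
    have hex : ∃ g : G, ConjClasses.mk (g ^ p ^ n) = C := by
      by_contra hno
      push_neg at hno
      apply hCne
      rw [classRootSum, Finset.filter_false_of_mem (fun g _ => hno g), Finset.sum_empty]
    obtain ⟨g0, hg0⟩ := hex
    have h0 : (∑ j : {C : ConjClasses G // classRootSum k p n C ≠ 0},
        c j • classRootSum k p n j.1).coeff g0 = 0 := by rw [hc]; rfl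
    rw [ma_sum_apply] at h0
    have hterm : ∀ j : {C : ConjClasses G // classRootSum k p n C ≠ 0},
        (c j • classRootSum k p n j.1).coeff g0
          = if j = (⟨C, hCne⟩ : {C : ConjClasses G // classRootSum k p n C ≠ 0})
            then c j else 0 := by
      intro j
      rw [ma_smul_apply, classRootSum_apply, hg0]
      by_cases hj : j = ⟨C, hCne⟩
      · subst hj
        simp
      · have hne2 : ¬(C = j.1) := fun hC => hj (Subtype.ext hC.symm)
        rw [if_neg hne2, mul_zero, if_neg hj]
    rw [Finset.sum_congr rfl (fun j _ => hterm j)] at h0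
    rw [Finset.sum_ite_eq' Finset.univ
      (⟨C, hCne⟩ : {C : ConjClasses G // classRootSum k p n C ≠ 0}) c] at h0
    simpa using h0
end

section
/- Let $k$ be algebraically closed of characteristic $2$, $m\ge 1$, $G=C_{2^m}$, and $\overline{Z}(kG)=Z(kG)/T_1^\perp(kG)$. Then $\dim_k \overline{Z}(kG)=2^{m-1}$, $\dim_k J(\overline{Z}(kG))=2^{m-1}-1$, $\dim_k J^2(\overline{Z}(kG))=\max(0,2^{m-1}-2)$, and $\dim_k J(\overline{Z}(kG))/J^2(\overline{Z}(kG))$ equals $1$ if $m>1$ and $0$ if $m=1$. -/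
set_option synthInstance.maxHeartbeats 1000000
set_option maxHeartbeats 2000000

/-- The sum `∑_{y : y² = c} y` in the group algebra of a finite abelian group: the element
`(C^{2^{-1}})^+` for the (singleton) conjugacy class `C = {c}`. These elements span the
first Külshammer ideal `T_1^⊥(kG)` in characteristic `2`. -/
noncomputable def sqrtClassSum (k : Type*) {G : Type*} [Field k] [CommGroup G] [Fintype G]
    [DecidableEq G] (c : G) : MonoidAlgebra k G :=
  ∑ y ∈ Finset.univ.filter (fun y : G => y * y = c), MonoidAlgebra.single y (1 : k)

/-- The first Külshammer ideal of `kG` (for `G` a finite abelian group, `char k = 2`),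
as an ideal of `Z(kG) = kG`. -/
noncomputable def kulshammerIdeal (k : Type*) (G : Type*) [Field k] [CommGroup G] [Fintype G]
    [DecidableEq G] : Ideal (MonoidAlgebra k G) :=
  Ideal.span (Set.range (sqrtClassSum k (G := G)))

/-- The quotient ring `Z̄(kG) = Z(kG)/T_1^⊥(kG)`. -/
abbrev ZbarCyclic (k : Type*) (G : Type*) [Field k] [CommGroup G] [Fintype G] [DecidableEq G] :
    Type _ :=
  MonoidAlgebra k G ⧸ kulshammerIdeal k G

/-- The Jacobson radical `J(Z̄(kG))`. -/
noncomputable def JradCyclic (k : Type*) (G : Type*) [Field k] [CommGroup G] [Fintype G]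
    [DecidableEq G] : Ideal (ZbarCyclic k G) :=
  (⊥ : Ideal (ZbarCyclic k G)).jacobson

open Polynomial Module

namespace KulAux

variable {k : Type*} [Field k] (n : ℕ)

noncomputable abbrev Bk (k : Type*) [Field k] (n : ℕ) : Type _ := AdjoinRoot (X ^ n : k[X])

noncomputable abbrev rt : Bk k n := AdjoinRoot.root (X ^ n : k[X])

lemma xpow_ne_zero : (X ^ n : k[X]) ≠ 0 := pow_ne_zero _ X_ne_zero

noncomputable def pb : PowerBasis k (Bk k n) := AdjoinRoot.powerBasis (xpow_ne_zero n)

lemma pb_dim : (pb (k := k) n).dim = n := by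
  simp [pb, AdjoinRoot.powerBasis, natDegree_X_pow]

lemma pb_gen : (pb (k := k) n).gen = rt n := rfl

instance : Module.Finite k (Bk k n) := Module.Finite.of_basis (pb (k := k) n).basis

lemma finrank_Bk : finrank k (Bk k n) = n := by
  rw [(pb (k := k) n).finrank, pb_dim]

lemma rt_pow_n : (rt n : Bk k n) ^ n = 0 := by
  rw [rt, ← AdjoinRoot.mk_X, ← map_pow]
  exact AdjoinRoot.mk_self

lemma rt_pow_of_le {s : ℕ} (hs : n ≤ s) : (rt n : Bk k n) ^ s = 0 := by
  rw [← Nat.sub_add_cancel hs, pow_add, rt_pow_n, mul_zero]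

lemma restrictScalars_span_rtpow (t : ℕ) :
    Submodule.restrictScalars k (Ideal.span {(rt n : Bk k n) ^ t})
      = Submodule.span k (Set.range fun i : Fin (n - t) => (rt n : Bk k n) ^ (t + (i : ℕ))) := by
  apply le_antisymm
  · intro x hx
    rw [Submodule.restrictScalars_mem, Ideal.mem_span_singleton] at hx
    obtain ⟨y, rfl⟩ := hx
    have hy : (rt n : Bk k n) ^ t * y
        = ∑ i : Fin ((pb (k := k) n).dim),
            ((pb (k := k) n).basis.repr y i) • ((rt n : Bk k n) ^ (t + (i : ℕ))) := by
      conv_lhs => rw [← (pb (k := k) n).basis.sum_repr y]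
      rw [Finset.mul_sum]
      refine Finset.sum_congr rfl fun i _ => ?_
      rw [(pb (k := k) n).basis_eq_pow, pb_gen, mul_smul_comm, ← pow_add]
    rw [hy]
    apply Submodule.sum_mem
    intro i _
    have hd : (pb (k := k) n).dim = n := pb_dim n
    have hilt : (i : ℕ) < n := by have h := i.isLt; omega
    by_cases hi : t + (i : ℕ) < n
    · exact Submodule.smul_mem _ _
        (Submodule.subset_span ⟨⟨(i : ℕ), by omega⟩, rfl⟩)
    · rw [rt_pow_of_le n (by omega), smul_zero]
      exact Submodule.zero_mem _
  · rw [Submodule.span_le]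
    rintro _ ⟨i, rfl⟩
    dsimp only
    rw [SetLike.mem_coe, Submodule.restrictScalars_mem, pow_add]
    exact Ideal.mul_mem_right _ _ (Ideal.subset_span rfl)

lemma finrank_span_rtpow (t : ℕ) :
    finrank k (Submodule.restrictScalars k (Ideal.span {(rt n : Bk k n) ^ t})) = n - t := by
  rw [restrictScalars_span_rtpow]
  have hd : (pb (k := k) n).dim = n := pb_dim n
  set emb : Fin (n - t) → Fin ((pb (k := k) n).dim) :=
    fun i => ⟨t + (i : ℕ), by have := i.isLt; omega⟩ with hemb
  have heq : (fun i : Fin (n - t) => (rt n : Bk k n) ^ (t + (i : ℕ)))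
      = (pb (k := k) n).basis ∘ emb := by
    funext i
    rw [Function.comp_apply, (pb (k := k) n).basis_eq_pow, pb_gen]
  have hli : LinearIndependent k (fun i : Fin (n - t) => (rt n : Bk k n) ^ (t + (i : ℕ))) := by
    rw [heq]
    exact (pb (k := k) n).basis.linearIndependent.comp emb
      (fun i j h => by
        have := congrArg Fin.val h
        simp only [hemb] at this
        exact Fin.ext (by omega))
  rw [finrank_span_eq_card hli, Fintype.card_fin]

lemma jacobson_bot_Bk (hn : 1 ≤ n) :
    (⊥ : Ideal (Bk k n)).jacobson = Ideal.span {(rt n : Bk k n)} := by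
  have heval : Polynomial.eval₂ (RingHom.id k) 0 (X ^ n : k[X]) = 0 := by
    simp [zero_pow (by omega : n ≠ 0)]
  set ε : Bk k n →+* k := AdjoinRoot.lift (RingHom.id k) 0 heval with hε
  have hsurj : Function.Surjective ε := fun c =>
    ⟨AdjoinRoot.mk _ (Polynomial.C c), by simp [hε, AdjoinRoot.lift_mk]⟩
  have hker : RingHom.ker ε = Ideal.span {(rt n : Bk k n)} := by
    apply le_antisymm
    · intro x hx
      obtain ⟨p, rfl⟩ := AdjoinRoot.mk_surjective x
      rw [RingHom.mem_ker, hε, AdjoinRoot.lift_mk, Polynomial.eval₂_at_zero] at hx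
      rw [Ideal.mem_span_singleton]
      obtain ⟨q, rfl⟩ := Polynomial.X_dvd_iff.mpr hx
      exact ⟨AdjoinRoot.mk _ q, by rw [map_mul, AdjoinRoot.mk_X]⟩
    · rw [Ideal.span_le, Set.singleton_subset_iff]
      rw [SetLike.mem_coe, RingHom.mem_ker, hε]
      exact AdjoinRoot.lift_root heval
  have hmax : (Ideal.span {(rt n : Bk k n)}).IsMaximal := by
    rw [← hker]; exact RingHom.ker_isMaximal_of_surjective ε hsurj
  apply le_antisymm
  · exact sInf_le ⟨bot_le, hmax⟩
  · rw [Ideal.span_le, Set.singleton_subset_iff, SetLike.mem_coe, Ideal.jacobson,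
      Ideal.mem_sInf]
    rintro J ⟨-, hJ⟩
    exact hJ.isPrime.mem_of_pow_mem n (by rw [rt_pow_n]; exact J.zero_mem)

end KulAux

open KulAux Module

/-- For `G = C_{2^m}` cyclic of order `2^m` (`m ≥ 1`) over an algebraically closed field `k`
of characteristic `2`, the quotient `Z̄ = Z(kG)/T_1^⊥(kG)` has dimension `2^{m-1}`, its
Jacobson radical `J(Z̄)` has dimension `2^{m-1} - 1`, `J²(Z̄)` has dimension
`max(0, 2^{m-1} - 2)`, and `dim J(Z̄)/J²(Z̄)` is `1` if `m > 1` and `0` if `m = 1`. -/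
theorem kulshammer_quotient_cyclic_two_group
    {k : Type*} [Field k] [IsAlgClosed k] [CharP k 2]
    {G : Type*} [CommGroup G] [Fintype G] [DecidableEq G] {m : ℕ} (hm : 1 ≤ m)
    (g : G) (hg : ∀ x : G, x ∈ Subgroup.zpowers g) (hcard : Nat.card G = 2 ^ m) :
    Module.finrank k (ZbarCyclic k G) = 2 ^ (m - 1) ∧
    Module.finrank k (Submodule.restrictScalars k (JradCyclic k G)) = 2 ^ (m - 1) - 1 ∧
    Module.finrank k (Submodule.restrictScalars k (JradCyclic k G * JradCyclic k G))
      = 2 ^ (m - 1) - 2 ∧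
    Module.finrank k
      ((Submodule.restrictScalars k (JradCyclic k G)) ⧸
        Submodule.comap (Submodule.restrictScalars k (JradCyclic k G)).subtype
          (Submodule.restrictScalars k (JradCyclic k G * JradCyclic k G)))
      = if 1 < m then 1 else 0 := by
  classical
  haveI : Fact (Nat.Prime 2) := ⟨by norm_num⟩
  set n := 2 ^ (m - 1) with hn
  have hn1 : 1 ≤ n := Nat.one_le_two_pow
  have hnn : 2 ^ m = 2 * n := by
    rw [hn, ← pow_succ']
    congr 1
    omega
  have hord : orderOf g = 2 ^ m := by
    rw [orderOf_eq_card_of_forall_mem_zpowers hg, hcard]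
  -- the target algebra B and the element a = 1 + r
  set r : Bk k n := rt n with hr
  set a : Bk k n := 1 + r with ha
  have key : ∀ s : ℕ, a ^ (2 ^ s) = 1 + r ^ (2 ^ s) := by
    intro s
    have hpoly : ((1 + X : k[X])) ^ (2 ^ s) = 1 + X ^ (2 ^ s) := by
      simpa using add_pow_char_pow (1 : k[X]) X 2 s
    have : a = AdjoinRoot.mk (X ^ n : k[X]) (1 + X) := by
      rw [ha, map_add, map_one, AdjoinRoot.mk_X, hr]
    rw [this, ← map_pow, hpoly, map_add, map_one, map_pow, AdjoinRoot.mk_X]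
  have har : a ^ (2 ^ m) = 1 := by
    rw [key m, rt_pow_of_le n (by rw [hnn]; omega), add_zero]
  have hmul : a * a ^ (2 ^ m - 1) = 1 := by
    rw [← pow_succ']
    rw [show 2 ^ m - 1 + 1 = 2 ^ m by omega]
    exact har
  set u : (Bk k n)ˣ := Units.mkOfMulEqOne a (a ^ (2 ^ m - 1)) hmul with hudef
  have hu : (u : Bk k n) = a := rfl
  have hu2m : u ^ (2 ^ m) = 1 := by
    ext
    rw [Units.val_pow_eq_pow_val, hu, har, Units.val_one]
  have hzker : ∀ e : ℤ, g ^ e = 1 → u ^ e = 1 := by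
    intro e he
    have hdvd : ((2 ^ m : ℕ) : ℤ) ∣ e := by
      have := orderOf_dvd_iff_zpow_eq_one.mpr he
      rwa [hord] at this
    obtain ⟨j, rfl⟩ := hdvd
    rw [zpow_mul, zpow_natCast, hu2m, one_zpow]
  have hexp : ∀ x : G, ∃ e : ℤ, g ^ e = x := fun x => Subgroup.mem_zpowers_iff.mp (hg x)
  set ex : G → ℤ := fun x => Classical.choose (hexp x) with hexdef
  have hex : ∀ x, g ^ (ex x) = x := fun x => Classical.choose_spec (hexp x)
  have hwd : ∀ (x : G) (e : ℤ), g ^ e = x → u ^ e = u ^ (ex x) := by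
    intro x e he
    have h1 : g ^ (e - ex x) = 1 := by
      rw [zpow_sub, he, hex x, mul_inv_cancel]
    have h2 := hzker _ h1
    rw [zpow_sub] at h2
    exact mul_inv_eq_one.mp h2
  set f : G →* Bk k n :=
    { toFun := fun x => ((u ^ (ex x) : (Bk k n)ˣ) : Bk k n)
      map_one' := by
        rw [← hwd 1 0 (by simp), zpow_zero, Units.val_one]
      map_mul' := by
        intro x y
        rw [← hwd (x * y) (ex x + ex y) (by rw [zpow_add, hex x, hex y]),
          zpow_add, Units.val_mul] } with hfdef
  have hfeq : ∀ (x : G) (e : ℤ), g ^ e = x → f x = ((u ^ e : (Bk k n)ˣ) : Bk k n) := by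
    intro x e he
    show ((u ^ (ex x) : (Bk k n)ˣ) : Bk k n) = _
    rw [hwd x e he]
  have hfpow : ∀ t : ℕ, f (g ^ t) = a ^ t := by
    intro t
    rw [hfeq (g ^ t) t (zpow_natCast g t), zpow_natCast, Units.val_pow_eq_pow_val, hu]
  have hfg : f g = a := by simpa using hfpow 1
  -- the distinguished involution z
  set z : G := g ^ n with hzdef
  have hz1 : z ≠ 1 := by
    intro h
    have hdvd := orderOf_dvd_of_pow_eq_one h
    rw [hord] at hdvd
    have h1 := Nat.le_of_dvd (by positivity) hdvd
    have h2 : n < 2 ^ m := by rw [hnn]; omega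
    omega
  have hzz : z * z = 1 := by
    rw [hzdef, ← pow_add, show n + n = 2 ^ m by omega, ← hord, pow_orderOf_eq_one]
  have hfz : f z = 1 := by
    have hkey := key (m - 1)
    rw [← hn] at hkey
    have hrn0 : r ^ n = 0 := rt_pow_n n
    rw [hzdef, hfpow n, hkey, hrn0, add_zero]
  -- the algebra map φ
  set φ : MonoidAlgebra k G →ₐ[k] Bk k n := MonoidAlgebra.lift k (Bk k n) G f with hφdef
  have hφs : ∀ x : G, φ (MonoidAlgebra.single x 1) = f x := by
    intro x
    rw [hφdef, MonoidAlgebra.lift_single, one_smul]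
  have h2B : (1 : Bk k n) + 1 = 0 := by
    have h2k : (1 : k) + 1 = 0 := by
      have := CharP.cast_eq_zero k 2
      rwa [Nat.cast_ofNat, ← one_add_one_eq_two] at this
    calc (1 : Bk k n) + 1 = algebraMap k (Bk k n) (1 + 1) := by rw [map_add, map_one]
    _ = 0 := by rw [h2k, map_zero]
  have hkill : ∀ c : G, φ (sqrtClassSum k c) = 0 := by
    intro c
    rw [sqrtClassSum, map_sum]
    simp only [hφs]
    refine Finset.sum_involution (fun y _ => y * z) ?_ ?_ ?_ ?_
    · intro y _
      rw [map_mul, hfz, mul_one]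
      calc f y + f y = (1 + 1) * f y := by ring
      _ = 0 := by rw [h2B, zero_mul]
    · intro y _ _ hc
      exact hz1 (by rwa [mul_eq_left] at hc)
    · intro y hy
      simp only [Finset.mem_filter, Finset.mem_univ, true_and] at hy ⊢
      rw [mul_mul_mul_comm, hy, hzz, mul_one]
    · intro y _
      rw [mul_assoc, hzz, mul_one]
  have hsurj : Function.Surjective φ := by
    have hrmem : r ∈ φ.range := by
      refine ⟨MonoidAlgebra.single g 1 - 1, ?_⟩
      show φ (MonoidAlgebra.single g 1 - 1) = r
      have hcalc : φ (MonoidAlgebra.single g 1 - 1) = φ (MonoidAlgebra.single g 1) - φ 1 :=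
        map_sub φ _ _
      rw [hcalc, map_one, hφs, hfg, ha]
      ring
    have htop : (⊤ : Subalgebra k (Bk k n)) ≤ φ.range := by
      rw [← AdjoinRoot.adjoinRoot_eq_top]
      exact Algebra.adjoin_le (Set.singleton_subset_iff.mpr hrmem)
    intro b
    exact htop (Algebra.mem_top (R := k) (A := Bk k n))
  -- dimensions
  haveI : Module.Finite k (MonoidAlgebra k G) :=
    Module.Finite.of_basis (MonoidAlgebra.basis G k)
  have hdimkG : finrank k (MonoidAlgebra k G) = 2 ^ m := by
    rw [← hcard, Nat.card_eq_fintype_card]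
    exact Module.finrank_eq_card_basis (MonoidAlgebra.basis G k)
  set ψ : MonoidAlgebra k G →ₗ[k] Bk k n := φ.toLinearMap with hψdef
  have hψφ : ∀ x, ψ x = φ x := fun _ => rfl
  have hker_dim : finrank k (LinearMap.ker ψ) = n := by
    have h1 := LinearMap.finrank_range_add_finrank_ker ψ
    have h2 : LinearMap.range ψ = ⊤ := LinearMap.range_eq_top.mpr hsurj
    rw [h2, finrank_top, finrank_Bk, hdimkG, hnn] at h1
    omega
  have hIk : kulshammerIdeal k G ≤ RingHom.ker φ := by
    rw [kulshammerIdeal, Ideal.span_le]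
    rintro x ⟨c, rfl⟩
    rw [SetLike.mem_coe, RingHom.mem_ker]
    exact hkill c
  -- the filter for c = 1
  have hfilter : Finset.univ.filter (fun y : G => y * y = 1) = {1, z} := by
    ext y
    simp only [Finset.mem_filter, Finset.mem_univ, true_and, Finset.mem_insert,
      Finset.mem_singleton]
    constructor
    · intro hyy
      obtain ⟨e, he⟩ := hexp y
      have hyy' : g ^ (e + e) = 1 := by rw [zpow_add, he, hyy]
      have hdvd : ((2 ^ m : ℕ) : ℤ) ∣ (e + e) := by
        have := orderOf_dvd_iff_zpow_eq_one.mpr hyy'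
        rwa [hord] at this
      obtain ⟨j, hj⟩ := hdvd
      have hen : e = (n : ℤ) * j := by
        have h2n : ((2 ^ m : ℕ) : ℤ) = 2 * (n : ℤ) := by exact_mod_cast hnn
        rw [h2n] at hj
        linarith
      have hy : y = z ^ j := by
        rw [← he, hen, zpow_mul, zpow_natCast, ← hzdef]
      have hz2 : z ^ (2 : ℤ) = 1 := by rw [zpow_two, hzz]
      rcases Int.even_or_odd j with ⟨c, hc⟩ | ⟨c, hc⟩
      · left
        rw [hy, hc, ← two_mul, zpow_mul, hz2, one_zpow]
      · right
        rw [hy, hc, zpow_add, zpow_one, zpow_mul, hz2, one_zpow, one_mul]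
    · rintro (rfl | rfl)
      · exact one_mul 1
      · exact hzz
  have hsqrt1 : sqrtClassSum k (1 : G)
      = MonoidAlgebra.single (1 : G) 1 + MonoidAlgebra.single z 1 := by
    rw [sqrtClassSum, hfilter, Finset.sum_insert (by
      rw [Finset.mem_singleton]
      exact fun h => hz1 h.symm), Finset.sum_singleton]
  -- the independent family inside the Kulshammer ideal
  set efam : Fin n → MonoidAlgebra k G := fun j =>
    MonoidAlgebra.single (g ^ (j : ℕ)) 1 + MonoidAlgebra.single (g ^ ((j : ℕ) + n)) 1
    with hefamdef
  have hefam_mem : ∀ j, efam j ∈ kulshammerIdeal k G := by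
    intro j
    have heq : efam j = MonoidAlgebra.single (g ^ (j : ℕ)) (1 : k) * sqrtClassSum k 1 := by
      simp only [hefamdef, hsqrt1, mul_add, MonoidAlgebra.single_mul_single, one_mul, mul_one]
      rw [hzdef, ← pow_add]
    rw [heq]
    exact Ideal.mul_mem_left _ _ (Ideal.subset_span ⟨1, rfl⟩)
  have hpowinj : ∀ s t : ℕ, s < 2 ^ m → t < 2 ^ m → g ^ s = g ^ t → s = t := by
    intro s t hs ht h
    exact pow_injOn_Iio_orderOf (by rw [Set.mem_Iio, hord]; exact hs)
      (by rw [Set.mem_Iio, hord]; exact ht) h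
  have hindep : LinearIndependent k efam := by
    set T : MonoidAlgebra k G →ₗ[k] (Fin n → k) :=
      LinearMap.pi (fun j : Fin n => (Finsupp.lapply (g ^ (j : ℕ)) : (G →₀ k) →ₗ[k] k) ∘ₗ
          (MonoidAlgebra.coeffLinearEquiv k).toLinearMap)
      with hTdef
    have hT : ∀ j, T (efam j) = Pi.single j 1 := by
      intro j
      funext j'
      have h1 : (MonoidAlgebra.single (g ^ (j : ℕ)) (1 : k)).coeff (g ^ (j' : ℕ))
          = if j = j' then 1 else 0 := by
        rw [MonoidAlgebra.coeff_single, Finsupp.single_apply]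
        by_cases h : j = j'
        · subst h; simp
        · rw [if_neg h, if_neg]
          intro hc
          exact h (Fin.ext (hpowinj _ _ (by have := j.isLt; omega) (by have := j'.isLt; omega) hc))
      have h2 : (MonoidAlgebra.single (g ^ ((j : ℕ) + n)) (1 : k)).coeff (g ^ (j' : ℕ)) = 0 := by
        rw [MonoidAlgebra.coeff_single, Finsupp.single_apply, if_neg]
        intro hc
        have := hpowinj _ _ (by have := j.isLt; omega) (by have := j'.isLt; omega) hc
        have hj' := j'.isLt
        omega
      have hadd : ∀ (p q : MonoidAlgebra k G) (x : G), (p + q).coeff x = p.coeff x + q.coeff x :=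
        fun p q x => by rw [MonoidAlgebra.coeff_add, Finsupp.add_apply]
      have hTv : T (efam j) j' = (efam j).coeff (g ^ (j' : ℕ)) := rfl
      rw [hTv, hefamdef]
      dsimp only
      rw [hadd, h1, h2, add_zero]
      by_cases h : j = j'
      · subst h; simp
      · rw [if_neg h, Pi.single_apply, if_neg (fun hc => h hc.symm)]
    have hstd : LinearIndependent k (fun j : Fin n => (Pi.single j 1 : Fin n → k)) := by
      have hfun : (fun j : Fin n => (Pi.single j 1 : Fin n → k)) = ⇑(Pi.basisFun k (Fin n)) :=
        funext fun j => (Pi.basisFun_apply k (Fin n) j).symm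
      rw [hfun]
      exact (Pi.basisFun k (Fin n)).linearIndependent
    apply LinearIndependent.of_comp T
    have : T ∘ efam = fun j : Fin n => (Pi.single j 1 : Fin n → k) := funext hT
    rw [this]
    exact hstd
  set efam' : Fin n → (Submodule.restrictScalars k (kulshammerIdeal k G)) :=
    fun j => ⟨efam j, hefam_mem j⟩ with hefam'def
  have hindep' : LinearIndependent k efam' :=
    LinearIndependent.of_comp (Submodule.restrictScalars k (kulshammerIdeal k G)).subtype hindep
  have hIdim : n ≤ finrank k (Submodule.restrictScalars k (kulshammerIdeal k G)) := by
    simpa using hindep'.fintype_card_le_finrank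
  have hkerψ : Submodule.restrictScalars k (RingHom.ker φ) = LinearMap.ker ψ := by
    ext x
    simp only [Submodule.restrictScalars_mem, RingHom.mem_ker, LinearMap.mem_ker]
    exact Iff.rfl
  have hEqsub : Submodule.restrictScalars k (kulshammerIdeal k G) = LinearMap.ker ψ := by
    apply Submodule.eq_of_le_of_finrank_le
    · intro x hx
      rw [LinearMap.mem_ker, hψφ]
      exact RingHom.mem_ker.mp (hIk hx)
    · rw [hker_dim]; exact hIdim
  have hkerEq : kulshammerIdeal k G = RingHom.ker φ := by
    apply Submodule.restrictScalars_injective k _ _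
    rw [hEqsub, hkerψ]
  -- the algebra isomorphism
  set E : ZbarCyclic k G ≃ₐ[k] Bk k n :=
    (Ideal.quotientEquivAlgOfEq k hkerEq).trans (Ideal.quotientKerAlgEquivOfSurjective hsurj)
    with hEdef
  haveI : Module.Finite k (ZbarCyclic k G) := Module.Finite.equiv E.symm.toLinearEquiv
  set ERH : ZbarCyclic k G →+* Bk k n := E.toAlgHom.toRingHom with hERHdef
  have hEbij : Function.Bijective ERH := E.bijective
  have hmapJ : Ideal.map ERH (JradCyclic k G) = Ideal.span {r} := by
    rw [JradCyclic, Ideal.map_jacobson_of_bijective hEbij, Ideal.map_bot,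
      jacobson_bot_Bk n hn1, hr]
  have hmapJJ : Ideal.map ERH (JradCyclic k G * JradCyclic k G) = Ideal.span {r ^ 2} := by
    rw [Ideal.map_mul, hmapJ, Ideal.span_singleton_mul_span_singleton, ← pow_two]
  have htrans : ∀ I : Ideal (ZbarCyclic k G),
      finrank k (Submodule.restrictScalars k I)
        = finrank k (Submodule.restrictScalars k (Ideal.map ERH I)) := by
    intro I
    have hset : Submodule.restrictScalars k (Ideal.map ERH I)
        = Submodule.map (E.toLinearEquiv : ZbarCyclic k G →ₗ[k] Bk k n)
            (Submodule.restrictScalars k I) := by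
      ext b
      rw [Submodule.restrictScalars_mem, Submodule.mem_map,
        Ideal.mem_map_iff_of_surjective ERH hEbij.2]
      constructor
      · rintro ⟨x, hx, rfl⟩
        exact ⟨x, hx, rfl⟩
      · rintro ⟨x, hx, rfl⟩
        exact ⟨x, hx, rfl⟩
    rw [hset, LinearEquiv.finrank_map_eq]
  -- final assembly
  have hfr1 : finrank k (ZbarCyclic k G) = n := by
    rw [E.toLinearEquiv.finrank_eq, finrank_Bk]
  have hfrJ : finrank k (Submodule.restrictScalars k (JradCyclic k G)) = n - 1 := by
    rw [htrans, hmapJ]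
    have := finrank_span_rtpow (k := k) n 1
    rwa [pow_one, ← hr] at this
  have hfrJJ : finrank k (Submodule.restrictScalars k (JradCyclic k G * JradCyclic k G))
      = n - 2 := by
    rw [htrans, hmapJJ]
    have := finrank_span_rtpow (k := k) n 2
    rwa [← hr] at this
  refine ⟨hfr1, hfrJ, hfrJJ, ?_⟩
  have hle : Submodule.restrictScalars k (JradCyclic k G * JradCyclic k G)
      ≤ Submodule.restrictScalars k (JradCyclic k G) := by
    intro x hx
    rw [Submodule.restrictScalars_mem] at hx ⊢
    exact Ideal.mul_le_left hx
  have hcomap : finrank k (Submodule.comap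
      (Submodule.restrictScalars k (JradCyclic k G)).subtype
      (Submodule.restrictScalars k (JradCyclic k G * JradCyclic k G))) = n - 2 := by
    rw [(Submodule.comapSubtypeEquivOfLe hle).finrank_eq, hfrJJ]
  have hrn := Submodule.finrank_quotient_add_finrank
    (Submodule.comap (Submodule.restrictScalars k (JradCyclic k G)).subtype
      (Submodule.restrictScalars k (JradCyclic k G * JradCyclic k G)))
  rw [hcomap, hfrJ] at hrn
  by_cases hm1 : 1 < m
  · rw [if_pos hm1]
    have hn2 : 2 ≤ n := by
      rw [hn]
      calc 2 = 2 ^ 1 := (pow_one 2).symm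
      _ ≤ 2 ^ (m - 1) := Nat.pow_le_pow_right (by norm_num) (by omega)
    omega
  · rw [if_neg hm1]
    have hmeq : m = 1 := by omega
    have hneq : n = 1 := by rw [hn, hmeq]; norm_num
    omega
end

section
/- Let $q\equiv 1\pmod 8$ be a prime power with $q-1=2^{n-1}q'$, $q'$ odd. For each $1\le s\le \frac{q'-1}{2}$, the set $\mathcal{I}_s=\{i : 1\le i\le 2^{n-3}q'-1,\ i\equiv \pm s\pmod{q'}\}$ contains exactly one element divisible by $2^{n-2}$. -/
/-- The index set `𝓘_s = {i : 1 ≤ i ≤ 2^{n-3} q' - 1, i ≡ ± s (mod q')}`. -/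
def indexSet (n q' s : ℕ) : Finset ℕ :=
  (Finset.Icc 1 (2 ^ (n - 3) * q' - 1)).filter
    (fun i => (q' : ℤ) ∣ ((i : ℤ) - (s : ℤ)) ∨ (q' : ℤ) ∣ ((i : ℤ) + (s : ℤ)))

/-- For a prime power `q ≡ 1 (mod 8)` with `q - 1 = 2^{n-1} q'`, `q'` odd, and each
`1 ≤ s ≤ (q'-1)/2`, the set `𝓘_s` contains exactly one element divisible by `2^{n-2}`. -/
theorem indexSet_unique_divisible
    {q n q' : ℕ} (hpp : IsPrimePow q) (hq8 : q % 8 = 1)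
    (hfac : q - 1 = 2 ^ (n - 1) * q') (hq' : Odd q')
    (s : ℕ) (hs1 : 1 ≤ s) (hs2 : s ≤ (q' - 1) / 2) :
    ∃! i : ℕ, i ∈ indexSet n q' s ∧ 2 ^ (n - 2) ∣ i := by
  -- Basic numerology: n ≥ 4 and q' ≥ 3
  have hq1 : 1 < q := hpp.one_lt
  have h8 : 8 ∣ q - 1 := by omega
  have hodd : q' % 2 = 1 := Nat.odd_iff.mp hq'
  have hcop2 : Nat.Coprime 2 q' :=
    (Nat.prime_two.coprime_iff_not_dvd).mpr (by omega)
  have h8' : (2:ℕ) ^ 3 ∣ 2 ^ (n - 1) := by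
    have : (2:ℕ)^3 ∣ 2 ^ (n-1) * q' := by rw [← hfac]; exact_mod_cast h8
    exact (Nat.Coprime.pow_left 3 hcop2).dvd_of_dvd_mul_right this
  have hn4 : 4 ≤ n := by
    have := (Nat.pow_dvd_pow_iff_le_right (by norm_num : 1 < 2)).mp h8'
    omega
  have hq'3 : 3 ≤ q' := by omega
  haveI : NeZero q' := ⟨by omega⟩
  set m : ℕ := 2 ^ (n - 2) with hm
  set P : ℕ := 2 ^ (n - 3) with hP
  have hmP : m = 2 * P := by
    rw [hm, hP, ← pow_succ']
    congr 1; omega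
  have hP1 : 1 ≤ P := Nat.one_le_two_pow
  have hcopm : Nat.Coprime m q' := Nat.Coprime.pow_left _ hcop2
  have hum : IsUnit (m : ZMod q') := (ZMod.isUnit_iff_coprime m q').mpr hcopm
  -- s is nonzero mod q'
  have hslt : s < q' := by omega
  have hsne : (s : ZMod q') ≠ 0 := by
    intro h
    have h2 := (ZMod.natCast_eq_zero_iff s q').mp h
    have := Nat.le_of_dvd (by omega) h2
    omega
  -- the solution u to m * u = s in ZMod q'
  set u : ZMod q' := (m : ZMod q')⁻¹ * s with hu
  have hmu : (m : ZMod q') * u = s := by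
    rw [hu, ← mul_assoc, mul_comm (m : ZMod q'), ZMod.inv_mul_of_unit _ hum, one_mul]
  have hune : u ≠ 0 := by
    intro h; rw [h, mul_zero] at hmu; exact hsne hmu.symm
  set a : ℕ := u.val with ha
  have ha1 : 1 ≤ a := by
    rcases Nat.eq_zero_or_pos a with h | h
    · exact absurd ((ZMod.val_eq_zero u).mp h) hune
    · exact h
  have halt : a < q' := ZMod.val_lt u
  have hau : (a : ZMod q') = u := by rw [ha, ZMod.natCast_zmod_val]
  -- pick k ∈ [1, (q'-1)/2]
  set k : ℕ := if a ≤ (q' - 1) / 2 then a else q' - a with hk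
  have hk1 : 1 ≤ k := by rw [hk]; split <;> omega
  have hk2 : k ≤ (q' - 1) / 2 := by rw [hk]; split <;> omega
  have hku : (k : ZMod q') = u ∨ (k : ZMod q') = -u := by
    rw [hk]; split
    · exact Or.inl hau
    · right
      have : ((q' - a : ℕ) : ZMod q') = (q' : ℕ) - (a : ℕ) := by
        push_cast [Nat.cast_sub halt.le]; ring
      rw [this, ZMod.natCast_self, hau]; ring
  -- characterization of membership in terms of ZMod
  have hmem : ∀ i : ℕ, (i ∈ indexSet n q' s ∧ m ∣ i) ↔
      (1 ≤ i ∧ i ≤ P * q' - 1 ∧ ((i : ZMod q') = s ∨ (i : ZMod q') = -s) ∧ m ∣ i) := by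
    intro i
    rw [indexSet, Finset.mem_filter, Finset.mem_Icc]
    constructor
    · rintro ⟨⟨⟨h1, h2⟩, h3⟩, h4⟩
      refine ⟨h1, h2, ?_, h4⟩
      rcases h3 with h | h
      · left
        have : (((i : ℤ) - (s : ℤ) : ℤ) : ZMod q') = 0 :=
          (ZMod.intCast_zmod_eq_zero_iff_dvd _ _).mpr h
        push_cast at this
        linear_combination this
      · right
        have : (((i : ℤ) + (s : ℤ) : ℤ) : ZMod q') = 0 :=
          (ZMod.intCast_zmod_eq_zero_iff_dvd _ _).mpr h
        push_cast at this
        linear_combination this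
    · rintro ⟨h1, h2, h3, h4⟩
      refine ⟨⟨⟨h1, h2⟩, ?_⟩, h4⟩
      rcases h3 with h | h
      · left
        rw [← ZMod.intCast_zmod_eq_zero_iff_dvd]
        push_cast
        linear_combination h
      · right
        rw [← ZMod.intCast_zmod_eq_zero_iff_dvd]
        push_cast
        linear_combination h
  refine ⟨m * k, ?_, ?_⟩
  · refine (hmem (m * k)).mpr ⟨Nat.mul_pos (pow_pos (by norm_num) _) hk1, ?_, ?_, Dvd.intro k rfl⟩
    · have h2k : 2 * k ≤ q' - 1 := by omega
      calc m * k = P * (2 * k) := by rw [hmP]; ring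
        _ ≤ P * (q' - 1) := Nat.mul_le_mul_left P h2k
        _ ≤ P * q' - 1 := by
            rw [Nat.mul_sub_one]
            omega
    · push_cast
      rcases hku with h | h
      · left; rw [h]; exact hmu
      · right; rw [h, mul_neg, hmu]
  · rintro j hj
    obtain ⟨hj1, hj2, hj3, k', rfl⟩ := (hmem j).mp hj
    have hk'1 : 1 ≤ k' := by
      rcases Nat.eq_zero_or_pos k' with h | h
      · subst h; simp at hj1
      · exact h
    have hk'2 : k' ≤ (q' - 1) / 2 := by
      have h1 : P * (2 * k') < P * q' := by
        calc P * (2 * k') = m * k' := by rw [hmP]; ring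
          _ < P * q' := by omega
      have := Nat.lt_of_mul_lt_mul_left h1
      omega
    -- m * k' ≡ ± s and m * k ≡ ± s imply k' = k
    have hkval : ∀ t : ℕ, 1 ≤ t → t ≤ (q' - 1) / 2 →
        ((t : ZMod q') = u ∨ (t : ZMod q') = -u) → t = k := by
      intro t ht1 ht2 htu
      have hklt : k < q' := by omega
      have htlt : t < q' := by omega
      rcases htu with h | h <;> rcases hku with h' | h'
      · have : (t : ZMod q') = (k : ZMod q') := by rw [h, h']
        have := congrArg ZMod.val this
        rwa [ZMod.val_cast_of_lt htlt, ZMod.val_cast_of_lt hklt] at this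
      · exfalso
        have hsum : ((t + k : ℕ) : ZMod q') = 0 := by push_cast [h, h']; ring
        have := (ZMod.natCast_eq_zero_iff _ _).mp hsum
        have := Nat.le_of_dvd (by omega) this
        omega
      · exfalso
        have hsum : ((t + k : ℕ) : ZMod q') = 0 := by push_cast [h, h']; ring
        have := (ZMod.natCast_eq_zero_iff _ _).mp hsum
        have := Nat.le_of_dvd (by omega) this
        omega
      · have : (t : ZMod q') = (k : ZMod q') := by rw [h, h']
        have := congrArg ZMod.val this
        rwa [ZMod.val_cast_of_lt htlt, ZMod.val_cast_of_lt hklt] at this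
    have hk'u : (k' : ZMod q') = u ∨ (k' : ZMod q') = -u := by
      rcases hj3 with h | h
      · left
        apply hum.mul_left_cancel
        rw [hmu]
        push_cast at h
        exact h
      · right
        apply hum.mul_left_cancel
        rw [mul_neg, hmu]
        push_cast at h
        exact h
    rw [hkval k' hk'1 hk'2 hk'u]
end
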